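/- arXiv:2001.01920 — 6 statements merged into one kernel-verified Lean document; each statement's English description precedes it below -/
import Mathlib

section
/- Fix a base point w₀ ∈ ℝ^d, a vector g ∈ ℝ^d, and constants λ ≥ 0 and μ > λ. Suppose F_k : ℝ^d → ℝ is continuously differentiable and λ-weakly convex, i.e. the map w ↦ F_k(w) + (λ/2)‖w‖² is convex. Then the FedDANE subproblem P_k(w) = F_k(w) + ⟨g − ∇F_k(w₀), w − w₀⟩ + (μ/2)‖w − w₀‖² is (μ−λ)-strongly convex, ∇P_k(w₀) = g, and if w̲ is a minimizer of P_k then (μ−λ)‖w̲ − w₀‖ ≤ ‖g‖. -/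
open scoped RealInnerProductSpace

lemma convexOn_univ_fderiv_le {E : Type*} [NormedAddCommGroup E] [NormedSpace ℝ E]
    {f : E → ℝ} (hf : ConvexOn ℝ Set.univ f) {x : E} {L : E →L[ℝ] ℝ}
    (hL : HasFDerivAt f L x) (y : E) : f x + L (y - x) ≤ f y := by
  have hline : HasDerivAt (fun t : ℝ => x + t • (y - x)) (y - x) 0 := by
    simpa using ((hasDerivAt_id (0 : ℝ)).smul_const (y - x)).const_add x
  have hcomp : HasDerivAt (fun t : ℝ => f (x + t • (y - x))) (L (y - x)) 0 := by
    have h0 : HasFDerivAt f L (x + (0 : ℝ) • (y - x)) := by simpa using hL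
    exact h0.comp_hasDerivAt 0 hline
  rw [hasDerivAt_iff_tendsto_slope] at hcomp
  have htend : Filter.Tendsto (slope (fun t : ℝ => f (x + t • (y - x))) 0)
      (nhdsWithin 0 (Set.Ioi 0)) (nhds (L (y - x))) :=
    hcomp.mono_left (nhdsWithin_mono _ fun t ht => ht.ne')
  have hev : ∀ᶠ t in nhdsWithin (0 : ℝ) (Set.Ioi 0),
      slope (fun t : ℝ => f (x + t • (y - x))) 0 t ≤ f y - f x := by
    filter_upwards [Ioo_mem_nhdsGT_of_mem (Set.left_mem_Ico.2 one_pos)] with t ht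
    have hxe : x + t • (y - x) = (1 - t) • x + t • y := by
      simp [smul_sub, sub_smul, one_smul]; abel
    have hconv := hf.2 (Set.mem_univ x) (Set.mem_univ y)
      (by linarith [ht.2] : (0:ℝ) ≤ 1 - t) ht.1.le (by ring)
    rw [slope_def_field]
    simp only [sub_zero, zero_smul, add_zero]
    rw [div_le_iff₀ ht.1]
    have : f (x + t • (y - x)) ≤ (1 - t) * f x + t * f y := by rw [hxe]; simpa using hconv
    nlinarith
  have := le_of_tendsto htend hev
  linarith

lemma affine_inner_convexOn {E : Type*} [NormedAddCommGroup E] [InnerProductSpace ℝ E]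
    (v : E) (k : ℝ) : ConvexOn ℝ Set.univ fun w : E => ⟪v, w⟫ + k := by
  refine ⟨convex_univ, fun x _ y _ a b ha hb hab => le_of_eq ?_⟩
  simp only [inner_add_right, real_inner_smul_right, smul_eq_mul]
  linear_combination (-k) * hab

lemma quad_hasFDerivAt {E : Type*} [NormedAddCommGroup E] [InnerProductSpace ℝ E]
    [CompleteSpace E] (r : ℝ) (z x : E) :
    HasFDerivAt (fun w : E => r * ‖w - z‖ ^ 2)
      (InnerProductSpace.toDual ℝ E ((2 * r) • (x - z))) x := by
  have h1 : HasFDerivAt (fun w : E => w - z) (ContinuousLinearMap.id ℝ E) x :=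
    (hasFDerivAt_id x).sub_const z
  have h2 := (h1.inner ℝ h1).const_mul r
  have h3 : HasFDerivAt (fun w : E => r * ‖w - z‖ ^ 2)
      (r • ((fderivInnerCLM ℝ (x - z, x - z)).comp
        ((ContinuousLinearMap.id ℝ E).prod (ContinuousLinearMap.id ℝ E)))) x := by
    simpa [real_inner_self_eq_norm_sq] using h2
  refine h3.congr_fderiv ?_
  ext v
  simp [fderivInnerCLM_apply, real_inner_smul_left, inner_sub_left, inner_sub_right,
    real_inner_comm x v, real_inner_comm z v]
  ring

/-- If `F` is `λ`-weakly convex (i.e. `w ↦ F w + (λ/2)‖w‖²` is convex)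
and `μ > λ ≥ 0`, then the FedDANE subproblem
`P w = F w + ⟪g - ∇F w₀, w - w₀⟫ + (μ/2)‖w - w₀‖²` is `(μ - λ)`-strongly convex,
`∇P w₀ = g`, and any minimizer `w̲` of `P` satisfies `(μ - λ)‖w̲ - w₀‖ ≤ ‖g‖`. -/
theorem feddane_subproblem_weakly_convex {d : ℕ}
    (F : EuclideanSpace ℝ (Fin d) → ℝ) (hF : ContDiff ℝ 1 F)
    (w₀ g : EuclideanSpace ℝ (Fin d)) (lam μ : ℝ) (hlam : 0 ≤ lam) (hμ : lam < μ)
    (hweak : ConvexOn ℝ Set.univ fun w => F w + lam / 2 * ‖w‖ ^ 2)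
    (P : EuclideanSpace ℝ (Fin d) → ℝ)
    (hP : P = fun w => F w + ⟪g - gradient F w₀, w - w₀⟫ + μ / 2 * ‖w - w₀‖ ^ 2) :
    StrongConvexOn Set.univ (μ - lam) P ∧
      gradient P w₀ = g ∧
      ∀ wbar : EuclideanSpace ℝ (Fin d),
        (∀ w, P wbar ≤ P w) → (μ - lam) * ‖wbar - w₀‖ ≤ ‖g‖ := by
  subst hP
  set c : EuclideanSpace ℝ (Fin d) := g - gradient F w₀ with hc
  set m : ℝ := μ - lam with hm
  have hm0 : 0 < m := sub_pos.2 hμ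
  set D : EuclideanSpace ℝ (Fin d) → (EuclideanSpace ℝ (Fin d) →L[ℝ] ℝ) :=
    fun v => InnerProductSpace.toDual ℝ (EuclideanSpace ℝ (Fin d)) v with hD
  set P : EuclideanSpace ℝ (Fin d) → ℝ :=
    fun w => F w + ⟪c, w - w₀⟫ + μ / 2 * ‖w - w₀‖ ^ 2 with hP
  have hFd : ∀ x, HasFDerivAt F (fderiv ℝ F x) x :=
    fun x => ((hF.differentiable one_ne_zero) x).hasFDerivAt
  have hFgrad : D (gradient F w₀) = fderiv ℝ F w₀ := by
    simp only [hD, gradient]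
    exact (InnerProductSpace.toDual ℝ _).apply_symm_apply _
  have hlin : ∀ x, HasFDerivAt (fun w => (⟪c, w - w₀⟫ : ℝ)) (D c) x := by
    intro x
    have := ((D c).hasFDerivAt (x := x)).sub_const (⟪c, w₀⟫ : ℝ)
    simpa [hD, inner_sub_right] using this
  have hPd : ∀ x, HasFDerivAt P (fderiv ℝ F x + D c + D (μ • (x - w₀))) x := by
    intro x
    have hq := quad_hasFDerivAt (μ / 2) w₀ x
    rw [show (2 * (μ / 2)) = μ from by ring] at hq
    exact ((hFd x).add (hlin x)).add hq
  have hkey : (fun w => P w - m / 2 * ‖w‖ ^ 2) =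
      fun w => (F w + lam / 2 * ‖w‖ ^ 2) +
        ((⟪c - μ • w₀, w⟫ : ℝ) + (μ / 2 * ‖w₀‖ ^ 2 - ⟪c, w₀⟫)) := by
    funext w
    simp only [hP, hm, inner_sub_left, inner_sub_right, real_inner_smul_left,
      norm_sub_sq_real, real_inner_comm w₀ w]
    ring
  have hconv : ConvexOn ℝ Set.univ fun w => P w - m / 2 * ‖w‖ ^ 2 := by
    rw [hkey]
    exact hweak.add (affine_inner_convexOn _ _)
  refine ⟨(strongConvexOn_iff_convex).2 hconv, ?_, ?_⟩
  · have h2 : fderiv ℝ F w₀ + D c + D (μ • (w₀ - w₀)) = D g := by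
      rw [← hFgrad]
      simp only [hD, hc, sub_self, smul_zero, map_zero, map_sub, add_zero]
      abel
    have h1 : HasFDerivAt P (D g) w₀ := h2 ▸ hPd w₀
    exact (hasGradientAt_iff_hasFDerivAt.2 h1).gradient
  · intro wbar hmin
    have hfd : ∀ x, HasFDerivAt (fun w => P w - m / 2 * ‖w‖ ^ 2)
        ((fderiv ℝ F x + D c + D (μ • (x - w₀))) - D (m • x)) x := by
      intro x
      have hq := quad_hasFDerivAt (m / 2) 0 x
      rw [show (2 * (m / 2)) = m from by ring, sub_zero] at hq
      have hq' : HasFDerivAt (fun w => m / 2 * ‖w‖ ^ 2) (D (m • x)) x := by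
        simpa [hD] using hq
      exact (hPd x).sub hq'
    have hminP : fderiv ℝ P wbar = 0 :=
      IsLocalMin.fderiv_eq_zero (Filter.Eventually.of_forall fun w => hmin w)
    have hPwbar : fderiv ℝ F wbar + D c + D (μ • (wbar - w₀)) = 0 := by
      rw [← (hPd wbar).fderiv]; exact hminP
    have h1 := convexOn_univ_fderiv_le hconv (hfd w₀) wbar
    have h2 := convexOn_univ_fderiv_le hconv (hfd wbar) w₀
    rw [hPwbar] at h2
    have e1 : ((fderiv ℝ F w₀ + D c + D (μ • (w₀ - w₀))) - D (m • w₀)) (wbar - w₀)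
        = (⟪g - m • w₀, wbar - w₀⟫ : ℝ) := by
      rw [← hFgrad]
      simp only [hD, hc, sub_self, smul_zero, map_zero, ContinuousLinearMap.sub_apply,
        ContinuousLinearMap.add_apply, ContinuousLinearMap.zero_apply,
        InnerProductSpace.toDual_apply_apply, inner_sub_left]
      ring
    have e2 : ((0 : EuclideanSpace ℝ (Fin d) →L[ℝ] ℝ) - D (m • wbar)) (w₀ - wbar)
        = -(⟪m • wbar, w₀ - wbar⟫ : ℝ) := by
      simp only [hD, ContinuousLinearMap.sub_apply, ContinuousLinearMap.zero_apply,
        ContinuousLinearMap.neg_apply, InnerProductSpace.toDual_apply_apply, zero_sub]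
    rw [e1] at h1
    rw [e2] at h2
    have hineq : (⟪g - m • w₀, wbar - w₀⟫ : ℝ) + -(⟪m • wbar, w₀ - wbar⟫ : ℝ) ≤ 0 := by
      linarith
    have hexp : (⟪g - m • w₀, wbar - w₀⟫ : ℝ) + -(⟪m • wbar, w₀ - wbar⟫ : ℝ)
        = (⟪g, wbar - w₀⟫ : ℝ) + m * ‖wbar - w₀‖ ^ 2 := by
      rw [show w₀ - wbar = -(wbar - w₀) from by abel, inner_neg_right]
      have hns : (⟪wbar, wbar - w₀⟫ : ℝ) - ⟪w₀, wbar - w₀⟫ = ‖wbar - w₀‖ ^ 2 := by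
        rw [← inner_sub_left]
        exact real_inner_self_eq_norm_sq _
      simp only [inner_sub_left, real_inner_smul_left, neg_neg]
      linear_combination m * hns
    rw [hexp] at hineq
    have hcs : -(⟪g, wbar - w₀⟫ : ℝ) ≤ ‖g‖ * ‖wbar - w₀‖ := by
      have h := real_inner_le_norm g (-(wbar - w₀))
      rw [inner_neg_right, norm_neg] at h
      exact h
    have hkey2 : m * ‖wbar - w₀‖ ^ 2 ≤ ‖g‖ * ‖wbar - w₀‖ := by linarith
    rcases eq_or_lt_of_le (norm_nonneg (wbar - w₀)) with h0 | h0
    · rw [← h0, mul_zero]; exact norm_nonneg g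
    · have h' : (m * ‖wbar - w₀‖) * ‖wbar - w₀‖ ≤ ‖g‖ * ‖wbar - w₀‖ := by
        rw [mul_assoc, ← sq]; exact hkey2
      exact le_of_mul_le_mul_right h' h0
end

section
/- Fix a base point w₀ ∈ ℝ^d, a vector g ∈ ℝ^d, μ > 0 and γ ∈ [0,1). Suppose F_k is convex with L-Lipschitz gradient, and f also has L-Lipschitz gradient. Let w̲ be the exact minimizer of the FedDANE subproblem P_k(w) = F_k(w) + ⟨g − ∇F_k(w₀), w − w₀⟩ + (μ/2)‖w − w₀‖², and let w be a γ-inexact minimizer, i.e. ‖w − w̲‖ ≤ γ‖w̲ − w₀‖. Then f(w) ≤ f(w₀) − ⟨∇f(w₀), g⟩/μ + (L/(2μ²) + γ/(2μ)) (‖∇f(w₀)‖² + ‖g‖²) + (L(1+γ)²/(2μ²)) ‖g‖². -/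
open scoped RealInnerProductSpace

lemma aux_convex_grad {E : Type*} [NormedAddCommGroup E] [InnerProductSpace ℝ E]
    [CompleteSpace E] {φ : E → ℝ} (hφ : Differentiable ℝ φ)
    (hconv : ConvexOn ℝ Set.univ φ) (x y : E) :
    ⟪gradient φ x, y - x⟫ ≤ φ y - φ x := by
  set v := y - x with hv
  set ψ : ℝ → ℝ := fun t => φ (x + t • v) with hψ
  have hc : ∀ t : ℝ, HasDerivAt ψ ⟪gradient φ (x + t • v), v⟫ t := by
    intro t
    have h1 : HasDerivAt (fun t : ℝ => x + t • v) v t :=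
      by simpa using ((hasDerivAt_id t).smul_const v).const_add x
    have h2 := ((hφ (x + t • v)).hasGradientAt.hasFDerivAt).comp_hasDerivAt t h1
    simpa [InnerProductSpace.toDual_apply_apply, Function.comp_def, hψ] using h2
  have h0 : HasDerivAt ψ ⟪gradient φ x, v⟫ 0 := by simpa using hc 0
  have hslope : Filter.Tendsto (slope ψ 0) (nhdsWithin 0 (Set.Ioi 0))
      (nhds ⟪gradient φ x, v⟫) :=
    (hasDerivAt_iff_tendsto_slope.mp h0).mono_left
      (nhdsWithin_mono 0 (fun t ht => ne_of_gt ht))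
  have hψ0 : ψ 0 = φ x := by simp [hψ]
  have hψ1 : ψ 1 = φ y := by simp [hψ, hv]
  refine le_of_tendsto hslope ?_
  filter_upwards [Ioo_mem_nhdsGT_of_mem (by norm_num : (0:ℝ) ∈ Set.Ico 0 1)] with t ht
  have hcvx := hconv.2 (Set.mem_univ x) (Set.mem_univ y)
    (by linarith [ht.2] : (0:ℝ) ≤ 1 - t) ht.1.le (by ring)
  have hpt : (1 - t) • x + t • y = x + t • v := by
    rw [hv]; module
  rw [hpt] at hcvx
  have : slope ψ 0 t = (ψ t - ψ 0) / t := by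
    rw [slope_def_field]; ring_nf
  rw [this, div_le_iff₀ ht.1, hψ0]
  have : ψ t ≤ (1 - t) * φ x + t * φ y := by simpa [hψ] using hcvx
  nlinarith [this, hψ1]

lemma aux_descent {E : Type*} [NormedAddCommGroup E] [InnerProductSpace ℝ E]
    [CompleteSpace E] {φ : E → ℝ} (hφ : Differentiable ℝ φ) {L : ℝ} (hL : 0 ≤ L)
    (hlip : ∀ x y, ‖gradient φ x - gradient φ y‖ ≤ L * ‖x - y‖) (x y : E) :
    φ y ≤ φ x + ⟪gradient φ x, y - x⟫ + L / 2 * ‖y - x‖ ^ 2 := by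
  set v := y - x with hv
  set ψ : ℝ → ℝ := fun t => φ (x + t • v) with hψ
  set ψ' : ℝ → ℝ := fun t => ⟪gradient φ (x + t • v), v⟫ with hψ'
  have hc : ∀ t : ℝ, HasDerivAt ψ (ψ' t) t := by
    intro t
    have h1 : HasDerivAt (fun t : ℝ => x + t • v) v t := by
      simpa using ((hasDerivAt_id t).smul_const v).const_add x
    have h2 := ((hφ (x + t • v)).hasGradientAt.hasFDerivAt).comp_hasDerivAt t h1
    simpa [InnerProductSpace.toDual_apply_apply, Function.comp_def, hψ, hψ'] using h2
  have hgradlip : LipschitzWith (Real.toNNReal L) (gradient φ) :=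
    LipschitzWith.of_dist_le_mul (fun a b => by
      simpa [dist_eq_norm, Real.coe_toNNReal L hL] using hlip a b)
  have hcont : Continuous ψ' := by
    apply Continuous.inner
    · exact hgradlip.continuous.comp (by continuity)
    · exact continuous_const
  have hFTC : ∫ t in (0:ℝ)..1, ψ' t = ψ 1 - ψ 0 :=
    intervalIntegral.integral_eq_sub_of_hasDerivAt (fun t _ => hc t)
      (hcont.intervalIntegrable 0 1)
  have hbound : ∫ t in (0:ℝ)..1, ψ' t ≤
      ∫ t in (0:ℝ)..1, (ψ' 0 + L * ‖v‖ ^ 2 * t) := by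
    apply intervalIntegral.integral_mono_on (by norm_num)
      (hcont.intervalIntegrable 0 1)
      ((by fun_prop : Continuous fun t : ℝ => ψ' 0 + L * ‖v‖ ^ 2 * t).intervalIntegrable 0 1)
    intro t ht
    have hdiff : ψ' t - ψ' 0 = ⟪gradient φ (x + t • v) - gradient φ x, v⟫ := by
      simp [hψ', inner_sub_left]
    have h1 : ⟪gradient φ (x + t • v) - gradient φ x, v⟫ ≤
        ‖gradient φ (x + t • v) - gradient φ x‖ * ‖v‖ := real_inner_le_norm _ _
    have h2 : ‖gradient φ (x + t • v) - gradient φ x‖ ≤ L * (t * ‖v‖) := by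
      have := hlip (x + t • v) x
      simpa [norm_smul, abs_of_nonneg ht.1] using this
    nlinarith [norm_nonneg v, hdiff, h1, h2]
  have hrhs : ∫ t in (0:ℝ)..1, (ψ' 0 + L * ‖v‖ ^ 2 * t) = ψ' 0 + L / 2 * ‖v‖ ^ 2 := by
    rw [intervalIntegral.integral_add (intervalIntegrable_const)
      ((by fun_prop : Continuous fun t : ℝ => L * ‖v‖ ^ 2 * t).intervalIntegrable 0 1),
      intervalIntegral.integral_const_mul, integral_id]
    norm_num
    ring
  have hψ0 : ψ 0 = φ x := by simp [hψ]
  have hψ1 : ψ 1 = φ y := by simp [hψ, hv]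
  have hψ'0 : ψ' 0 = ⟪gradient φ x, v⟫ := by simp [hψ']
  rw [hFTC] at hbound
  rw [hrhs] at hbound
  rw [hψ0, hψ1, hψ'0] at hbound
  linarith

lemma aux_arith (μ γ L fw fw0 Gg Ge Gv Gu nG ng nu nv nw ne : ℝ)
    (hμ : 0 < μ) (hγ0 : 0 ≤ γ) (hL : 0 ≤ L)
    (hnG : 0 ≤ nG) (hng : 0 ≤ ng) (hnu : 0 ≤ nu) (hnv : 0 ≤ nv) (hnw : 0 ≤ nw)
    (hA : fw ≤ fw0 + Gu + Gv + L / 2 * nw ^ 2)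
    (hB : μ * Gu = -(Gg + Ge))
    (hC1 : |Ge| ≤ nG * ne) (hC2 : ne ≤ L * nu) (hC3 : μ * nu ≤ ng)
    (hD1 : |Gv| ≤ nG * nv) (hD2 : nv ≤ γ * nu)
    (hE : nw ≤ nu + nv) :
    fw ≤ fw0 - Gg / μ + (L / (2 * μ ^ 2) + γ / (2 * μ)) * (nG ^ 2 + ng ^ 2) +
      L * (1 + γ) ^ 2 / (2 * μ ^ 2) * ng ^ 2 := by
  have e1 : -Ge ≤ L * (nG * nu) := by
    have h := (abs_le.mp hC1).1
    nlinarith [mul_le_mul_of_nonneg_left hC2 hnG]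
  have e2 : Gv ≤ nG * nv := (le_abs_self Gv).trans hD1
  have e5 : μ * nw ≤ (1 + γ) * ng := by nlinarith [mul_le_mul_of_nonneg_left hD2 hμ.le]
  -- key bounds multiplied by 2 μ²
  have k1 : 2 * μ ^ 2 * Gu ≤ -2 * μ * Gg + L * (nG ^ 2 + ng ^ 2) := by
    have h1 : 2 * μ * (μ * Gu) = 2 * μ ^ 2 * Gu := by ring
    have h2 : 2 * μ * (-Ge) ≤ 2 * μ * (L * (nG * nu)) :=
      mul_le_mul_of_nonneg_left e1 (by positivity)
    have h3 : 2 * L * nG * (μ * nu) ≤ 2 * L * nG * ng :=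
      mul_le_mul_of_nonneg_left hC3 (by positivity)
    nlinarith [hB, sq_nonneg (nG - ng), hL]
  have k2 : 2 * μ ^ 2 * Gv ≤ γ * μ * (nG ^ 2 + ng ^ 2) := by
    have h2 : 2 * μ ^ 2 * Gv ≤ 2 * μ ^ 2 * (nG * nv) :=
      mul_le_mul_of_nonneg_left e2 (by positivity)
    have h3 : 2 * μ ^ 2 * (nG * nv) ≤ 2 * μ ^ 2 * (nG * (γ * nu)) := by
      have := mul_le_mul_of_nonneg_left hD2 hnG
      nlinarith [sq_nonneg μ]
    have h4 : 2 * γ * μ * nG * (μ * nu) ≤ 2 * γ * μ * nG * ng :=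
      mul_le_mul_of_nonneg_left hC3 (by positivity)
    nlinarith [mul_nonneg (mul_nonneg hγ0 hμ.le) (sq_nonneg (nG - ng))]
  have k3 : μ ^ 2 * L * nw ^ 2 ≤ L * (1 + γ) ^ 2 * ng ^ 2 := by
    have h1 : (μ * nw) ^ 2 ≤ ((1 + γ) * ng) ^ 2 :=
      pow_le_pow_left₀ (mul_nonneg hμ.le hnw) e5 2
    have h2 : L * (μ * nw) ^ 2 ≤ L * ((1 + γ) * ng) ^ 2 :=
      mul_le_mul_of_nonneg_left h1 hL
    calc μ ^ 2 * L * nw ^ 2 = L * (μ * nw) ^ 2 := by ring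
      _ ≤ L * ((1 + γ) * ng) ^ 2 := h2
      _ = L * (1 + γ) ^ 2 * ng ^ 2 := by ring
  have key : 2 * μ ^ 2 * fw ≤ 2 * μ ^ 2 * fw0 - 2 * μ * Gg +
      (L + γ * μ) * (nG ^ 2 + ng ^ 2) + L * (1 + γ) ^ 2 * ng ^ 2 := by
    have hA2 : 2 * μ ^ 2 * fw ≤ 2 * μ ^ 2 * (fw0 + Gu + Gv + L / 2 * nw ^ 2) :=
      mul_le_mul_of_nonneg_left hA (by positivity)
    have hA3 : 2 * μ ^ 2 * (fw0 + Gu + Gv + L / 2 * nw ^ 2) =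
        2 * μ ^ 2 * fw0 + 2 * μ ^ 2 * Gu + 2 * μ ^ 2 * Gv + μ ^ 2 * L * nw ^ 2 := by ring
    rw [hA3] at hA2
    linarith [k1, k2, k3]
  have h2μ : (0:ℝ) < 2 * μ ^ 2 := by positivity
  rw [← mul_le_mul_iff_right₀ h2μ]
  have hr : 2 * μ ^ 2 * (fw0 - Gg / μ + (L / (2 * μ ^ 2) + γ / (2 * μ)) * (nG ^ 2 + ng ^ 2) +
      L * (1 + γ) ^ 2 / (2 * μ ^ 2) * ng ^ 2) = 2 * μ ^ 2 * fw0 - 2 * μ * Gg +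
      (L + γ * μ) * (nG ^ 2 + ng ^ 2) + L * (1 + γ) ^ 2 * ng ^ 2 := by
    field_simp
  rw [hr]
  exact key

/-- One-device inexact descent bound (convex case).  If `F k` is
convex with `L`-Lipschitz gradient, `f = ∑ k, p k * F k` also has `L`-Lipschitz
gradient, `w̲` is the exact minimizer of the FedDANE subproblem
`P w = F k w + ⟪g - ∇F_k(w₀), w - w₀⟫ + (μ/2)‖w - w₀‖²`, and `w` is a `γ`-inexact
minimizer (`‖w - w̲‖ ≤ γ ‖w̲ - w₀‖`), then
`f(w) ≤ f(w₀) - ⟪∇f(w₀), g⟫/μ + (L/(2μ²) + γ/(2μ))(‖∇f(w₀)‖² + ‖g‖²)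
        + (L(1+γ)²/(2μ²))‖g‖²`. -/
theorem feddane_inexact_descent_convex {d N : ℕ}
    (F : Fin N → EuclideanSpace ℝ (Fin d) → ℝ) (hF : ∀ k, ContDiff ℝ 1 (F k))
    (p : Fin N → ℝ) (hp : ∀ k, 0 ≤ p k) (hpsum : ∑ k, p k = 1)
    (f : EuclideanSpace ℝ (Fin d) → ℝ) (hf : f = fun w => ∑ k, p k * F k w)
    (w₀ g : EuclideanSpace ℝ (Fin d)) (μ γ L : ℝ)
    (hμ : 0 < μ) (hγ0 : 0 ≤ γ) (hγ1 : γ < 1) (hL : 0 ≤ L)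
    (k : Fin N) (hconv : ConvexOn ℝ Set.univ (F k))
    (hFlip : ∀ x y, ‖gradient (F k) x - gradient (F k) y‖ ≤ L * ‖x - y‖)
    (hflip : ∀ x y, ‖gradient f x - gradient f y‖ ≤ L * ‖x - y‖)
    (P : EuclideanSpace ℝ (Fin d) → ℝ)
    (hP : P = fun w =>
      F k w + ⟪g - gradient (F k) w₀, w - w₀⟫ + μ / 2 * ‖w - w₀‖ ^ 2)
    (wbar w : EuclideanSpace ℝ (Fin d))
    (hmin : ∀ v, P wbar ≤ P v)
    (hinexact : ‖w - wbar‖ ≤ γ * ‖wbar - w₀‖) :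
    f w ≤ f w₀ - ⟪gradient f w₀, g⟫ / μ +
        (L / (2 * μ ^ 2) + γ / (2 * μ)) * (‖gradient f w₀‖ ^ 2 + ‖g‖ ^ 2) +
        L * (1 + γ) ^ 2 / (2 * μ ^ 2) * ‖g‖ ^ 2 := by
  have hdFk : Differentiable ℝ (F k) := (hF k).differentiable (by norm_num)
  set a := gradient (F k) w₀ with ha
  set b := gradient (F k) wbar with hb
  -- derivative of P at wbar
  have h1 : HasFDerivAt (F k) (InnerProductSpace.toDual ℝ _ b) wbar :=
    (hdFk wbar).hasGradientAt.hasFDerivAt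
  have h2 : HasFDerivAt (fun v : EuclideanSpace ℝ (Fin d) => ⟪g - a, v - w₀⟫)
      (innerSL ℝ (g - a)) wbar := by
    have hi : HasFDerivAt (fun v : EuclideanSpace ℝ (Fin d) => v - w₀)
        (ContinuousLinearMap.id ℝ _) wbar := (hasFDerivAt_id wbar).sub_const w₀
    have h2' := ((innerSL ℝ (g - a)).hasFDerivAt (x := wbar - w₀)).comp wbar hi
    rw [ContinuousLinearMap.comp_id] at h2'
    exact h2'
  have h3 : HasFDerivAt (fun v : EuclideanSpace ℝ (Fin d) => μ / 2 * ‖v - w₀‖ ^ 2)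
      ((μ / 2) • (2 • (innerSL ℝ (wbar - w₀)).comp (ContinuousLinearMap.id ℝ _))) wbar :=
    (((hasFDerivAt_id wbar).sub_const w₀).norm_sq).const_mul (μ / 2)
  have hPderiv : HasFDerivAt P
      (InnerProductSpace.toDual ℝ _ b + innerSL ℝ (g - a) +
        (μ / 2) • (2 • (innerSL ℝ (wbar - w₀)).comp (ContinuousLinearMap.id ℝ _))) wbar := by
    rw [hP]; exact (h1.add h2).add h3
  have hlocmin : IsLocalMin P wbar := Filter.Eventually.of_forall hmin
  have hD0 : (InnerProductSpace.toDual ℝ _ b + innerSL ℝ (g - a) +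
      (μ / 2) • (2 • (innerSL ℝ (wbar - w₀)).comp
        (ContinuousLinearMap.id ℝ (EuclideanSpace ℝ (Fin d))))) = 0 := by
    have h := hPderiv.fderiv
    rw [hlocmin.fderiv_eq_zero] at h
    exact h.symm
  set q := b + (g - a) + μ • (wbar - w₀) with hq
  have hq0 : q = 0 := by
    rw [← inner_self_eq_zero (𝕜 := ℝ)]
    have h := congrArg (fun T : EuclideanSpace ℝ (Fin d) →L[ℝ] ℝ => T q) hD0
    simp only [ContinuousLinearMap.add_apply, ContinuousLinearMap.smul_apply,
      ContinuousLinearMap.coe_comp', Function.comp_apply, ContinuousLinearMap.coe_id', id_eq,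
      InnerProductSpace.toDual_apply_apply, innerSL_apply_apply, smul_eq_mul, two_smul,
      ContinuousLinearMap.zero_apply] at h
    rw [hq, inner_add_left, inner_add_left, real_inner_smul_left]
    linarith
  -- key vector identity
  have hμu : μ • (wbar - w₀) = -(g + (b - a)) := by
    refine eq_neg_of_add_eq_zero_left ?_
    rw [← hq0, hq]; module
  -- monotonicity of the gradient
  have hmono : 0 ≤ ⟪b - a, wbar - w₀⟫ := by
    have h1' := aux_convex_grad hdFk hconv w₀ wbar
    have h2' := aux_convex_grad hdFk hconv wbar w₀
    rw [show w₀ - wbar = -(wbar - w₀) by abel, inner_neg_right] at h2'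
    rw [inner_sub_left]
    linarith
  -- bound on ‖wbar - w₀‖
  have hu : μ * ‖wbar - w₀‖ ≤ ‖g‖ := by
    have hid : ⟪μ • (wbar - w₀), wbar - w₀⟫ = μ * ‖wbar - w₀‖ ^ 2 := by
      rw [real_inner_smul_left, real_inner_self_eq_norm_sq]
    rw [hμu, inner_neg_left, inner_add_left] at hid
    have hg1 : -⟪g, wbar - w₀⟫ ≤ ‖g‖ * ‖wbar - w₀‖ := by
      have := abs_real_inner_le_norm g (wbar - w₀)
      have := neg_abs_le ⟪g, wbar - w₀⟫
      linarith
    have hsq : μ * ‖wbar - w₀‖ ^ 2 ≤ ‖g‖ * ‖wbar - w₀‖ := by linarith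
    rcases eq_or_lt_of_le (norm_nonneg (wbar - w₀)) with h0 | h0
    · rw [← h0]; simpa using norm_nonneg g
    · exact le_of_mul_le_mul_right (by nlinarith) h0
  -- differentiability of f
  have hfd : Differentiable ℝ f := by
    rw [hf]
    exact Differentiable.fun_sum fun i _ => ((hF i).differentiable (by norm_num)).const_mul (p i)
  set G := gradient f w₀ with hG
  -- descent lemma
  have hdesc := aux_descent hfd hL hflip w₀ w
  rw [show w - w₀ = (wbar - w₀) + (w - wbar) by abel, inner_add_right] at hdesc
  have hdesc' : f w ≤ f w₀ + ⟪G, wbar - w₀⟫ + ⟪G, w - wbar⟫ +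
      L / 2 * ‖(wbar - w₀) + (w - wbar)‖ ^ 2 := by linarith
  have hnw : ‖(wbar - w₀) + (w - wbar)‖ ≤ ‖wbar - w₀‖ + ‖w - wbar‖ := norm_add_le _ _
  -- inner product identity
  have hGu : μ * ⟪G, wbar - w₀⟫ = -(⟪G, g⟫ + ⟪G, b - a⟫) := by
    rw [← real_inner_smul_right, hμu, inner_neg_right, inner_add_right]
  have := aux_arith μ γ L (f w) (f w₀) ⟪G, g⟫ ⟪G, b - a⟫ ⟪G, w - wbar⟫ ⟪G, wbar - w₀⟫
    ‖G‖ ‖g‖ ‖wbar - w₀‖ ‖w - wbar‖ ‖(wbar - w₀) + (w - wbar)‖ ‖b - a‖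
    hμ hγ0 hL (norm_nonneg _) (norm_nonneg _) (norm_nonneg _) (norm_nonneg _) (norm_nonneg _)
    hdesc' hGu (abs_real_inner_le_norm G (b - a)) (hFlip wbar w₀) hu
    (abs_real_inner_le_norm G (w - wbar)) hinexact hnw
  exact this
end

section
/- Fix a base point w₀ ∈ ℝ^d, a vector g ∈ ℝ^d, constants λ ≥ 0, μ > λ and γ ∈ [0,1). Suppose F_k has L-Lipschitz gradient and is λ-weakly convex (w ↦ F_k(w) + (λ/2)‖w‖² is convex), and f has L-Lipschitz gradient. Let w̲ be the exact minimizer of the FedDANE subproblem P_k(w) = F_k(w) + ⟨g − ∇F_k(w₀), w − w₀⟩ + (μ/2)‖w − w₀‖², and let w be a γ-inexact minimizer, i.e. ‖w − w̲‖ ≤ γ‖w̲ − w₀‖. Then f(w) ≤ f(w₀) − ⟨∇f(w₀), g⟩/μ + (L/(2μ(μ−λ)) + γ/(2(μ−λ))) (‖∇f(w₀)‖² + ‖g‖²) + (L(1+γ)²/(2(μ−λ)²)) ‖g‖². -/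
open scoped RealInnerProductSpace

section Aux

variable {E : Type*} [NormedAddCommGroup E] [InnerProductSpace ℝ E] [CompleteSpace E]

lemma myHasGradientAt_add {f g : E → ℝ} {f' g' x : E}
    (hf : HasGradientAt f f' x) (hg : HasGradientAt g g' x) :
    HasGradientAt (fun w => f w + g w) (f' + g') x := by
  rw [hasGradientAt_iff_hasFDerivAt, map_add]
  exact hf.hasFDerivAt.add hg.hasFDerivAt

lemma myHasDerivAt_line (h : E → ℝ) (G : E) (x v : E) (t : ℝ)
    (hg : HasGradientAt h G (x + t • v)) :
    HasDerivAt (fun s : ℝ => h (x + s • v)) ⟪G, v⟫ t := by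
  have hline : HasDerivAt (fun s : ℝ => x + s • v) v t := by
    simpa using ((hasDerivAt_id t).smul_const v).const_add x
  have := hg.hasFDerivAt.comp_hasDerivAt t hline
  simp at this
  exact this

lemma myHasGradientAt_linear (a z v : E) :
    HasGradientAt (fun w => ⟪a, w - z⟫) a v := by
  have h1 : HasFDerivAt (fun w : E => ⟪a, w⟫) (InnerProductSpace.toDual ℝ E a) v :=
    (InnerProductSpace.toDual ℝ E a).hasFDerivAt
  have h2 := h1.sub_const ⟪a, z⟫
  rw [hasGradientAt_iff_hasFDerivAt]
  have hfun : (fun w : E => ⟪a, w - z⟫) = fun w : E => ⟪a, w⟫ - ⟪a, z⟫ := by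
    funext w; rw [inner_sub_right]
  rw [hfun]
  exact h2

lemma myHasGradientAt_quad (c : ℝ) (z v : E) :
    HasGradientAt (fun w => c * ‖w - z‖ ^ 2) ((2 * c) • (v - z)) v := by
  rw [hasGradientAt_iff_hasFDerivAt]
  have h1 : HasFDerivAt (fun w : E => w - z) (ContinuousLinearMap.id ℝ E) v :=
    (hasFDerivAt_id v).sub_const z
  have h3 := (h1.inner ℝ h1).const_mul c
  have heq : (fun w : E => c * ⟪w - z, w - z⟫) = fun w : E => c * ‖w - z‖ ^ 2 := by
    funext w; rw [real_inner_self_eq_norm_sq]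
  rw [heq] at h3
  refine h3.congr_fderiv ?_
  ext u
  simp only [InnerProductSpace.toDual_apply_apply, ContinuousLinearMap.coe_smul',
    Pi.smul_apply, ContinuousLinearMap.coe_comp', Function.comp_apply,
    ContinuousLinearMap.prod_apply, ContinuousLinearMap.coe_id', id_eq,
    fderivInnerCLM_apply, smul_eq_mul]
  rw [real_inner_smul_left, real_inner_comm u (v - z)]
  ring

lemma myHasGradientAt_normsq (c : ℝ) (v : E) :
    HasGradientAt (fun w => c * ‖w‖ ^ 2) ((2 * c) • v) v := by
  simpa using myHasGradientAt_quad c 0 v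

lemma my_descent (h : E → ℝ) (G : E → E) (hg : ∀ x, HasGradientAt h (G x) x)
    (L : ℝ) (hlip : ∀ x y, ‖G x - G y‖ ≤ L * ‖x - y‖) (x y : E) :
    h y ≤ h x + ⟪G x, y - x⟫ + L / 2 * ‖y - x‖ ^ 2 := by
  set v := y - x with hv
  set φ : ℝ → ℝ := fun t => h (x + t • v) - t * ⟪G x, v⟫ - L / 2 * t ^ 2 * ‖v‖ ^ 2 with hφ
  have hder : ∀ t : ℝ,
      HasDerivAt φ (⟪G (x + t • v), v⟫ - ⟪G x, v⟫ - L * t * ‖v‖ ^ 2) t := by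
    intro t
    have h1 := myHasDerivAt_line h (G (x + t • v)) x v t (hg _)
    have h2 : HasDerivAt (fun t : ℝ => t * ⟪G x, v⟫) ⟪G x, v⟫ t := by
      simpa using (hasDerivAt_id t).mul_const ⟪G x, v⟫
    have h3 : HasDerivAt (fun t : ℝ => L / 2 * t ^ 2 * ‖v‖ ^ 2) (L * t * ‖v‖ ^ 2) t := by
      have := ((hasDerivAt_pow 2 t).const_mul (L / 2)).mul_const (‖v‖ ^ 2)
      refine this.congr_deriv ?_
      ring
    exact (h1.sub h2).sub h3
  have hanti : AntitoneOn φ (Set.Icc 0 1) := by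
    apply antitoneOn_of_deriv_nonpos (convex_Icc 0 1)
    · exact fun t _ => (hder t).continuousAt.continuousWithinAt
    · exact fun t _ => (hder t).differentiableAt.differentiableWithinAt
    · intro t ht
      rw [interior_Icc] at ht
      rw [(hder t).deriv]
      have hb : ⟪G (x + t • v) - G x, v⟫ ≤ L * t * ‖v‖ ^ 2 := by
        calc ⟪G (x + t • v) - G x, v⟫ ≤ ‖G (x + t • v) - G x‖ * ‖v‖ :=
              real_inner_le_norm _ _
          _ ≤ (L * ‖(x + t • v) - x‖) * ‖v‖ := by
              have := hlip (x + t • v) x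
              nlinarith [norm_nonneg v]
          _ = L * t * ‖v‖ ^ 2 := by
              rw [add_sub_cancel_left, norm_smul, Real.norm_eq_abs, abs_of_pos ht.1]
              ring
      rw [inner_sub_left] at hb
      linarith
  have h01 := hanti (Set.left_mem_Icc.mpr zero_le_one) (Set.right_mem_Icc.mpr zero_le_one)
    zero_le_one
  have e0 : φ 0 = h x := by simp [hφ]
  have e1 : φ 1 = h y - ⟪G x, v⟫ - L / 2 * ‖v‖ ^ 2 := by
    simp [hφ, hv]
  rw [e0, e1] at h01
  linarith

lemma my_first_order (G : E → ℝ) (gG : E → E) (hg : ∀ x, HasGradientAt G (gG x) x)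
    (hconv : ConvexOn ℝ Set.univ G) (x y : E) :
    G x + ⟪gG x, y - x⟫ ≤ G y := by
  set φ : ℝ → ℝ := fun t => G (x + t • (y - x)) with hφ
  have hconvφ : ConvexOn ℝ Set.univ φ := by
    have h1 := hconv.comp_affineMap (AffineMap.lineMap x y)
    simp only [Set.preimage_univ] at h1
    have heq : φ = G ∘ (AffineMap.lineMap x y) := by
      funext t
      show G (x + t • (y - x)) = G (AffineMap.lineMap x y t)
      apply congrArg
      simp only [AffineMap.lineMap_apply_module]
      module
    rw [heq]
    exact h1
  have hd : HasDerivAt φ ⟪gG x, y - x⟫ 0 := by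
    have := myHasDerivAt_line G (gG x) x (y - x) 0 (by simpa using hg x)
    exact this
  have hs := hconvφ.le_slope_of_hasDerivAt (Set.mem_univ 0) (Set.mem_univ 1) zero_lt_one hd
  have e0 : φ 0 = G x := by simp [hφ]
  have e1 : φ 1 = G y := by simp [hφ]
  rw [slope_def_field, e0, e1] at hs
  simp at hs
  linarith

end Aux


lemma myT0 (r bb nu : ℝ) (hr0 : 0 ≤ r) (hnu : 0 < nu) (h : nu * r ^ 2 ≤ bb * r)
    (hb0 : 0 ≤ bb) : nu * r ≤ bb := by
  rcases eq_or_lt_of_le hr0 with h' | h'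
  · rw [← h']; simpa using hb0
  · exact (mul_le_mul_iff_of_pos_right h').mp (by nlinarith)

lemma myT1 (aa bb r L μ ν : ℝ) (ha0 : 0 ≤ aa) (hL : 0 ≤ L) (hμ0 : 0 < μ)
    (hν : 0 < ν) (hkey : ν * r ≤ bb) (hr0 : 0 ≤ r) :
    aa * (L * r) / μ ≤ L / (2 * μ * ν) * (aa ^ 2 + bb ^ 2) := by
  rw [div_mul_eq_mul_div, div_le_div_iff₀ hμ0 (by positivity)]
  nlinarith [mul_le_mul_of_nonneg_left hkey (mul_nonneg hL ha0),
    mul_nonneg (mul_nonneg hμ0.le hL) (sq_nonneg (aa - bb)), hμ0.le]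

lemma myT2 (aa bb r γ ν : ℝ) (ha0 : 0 ≤ aa) (hγ0 : 0 ≤ γ)
    (hν : 0 < ν) (hkey : ν * r ≤ bb) (hr0 : 0 ≤ r) :
    aa * (γ * r) ≤ γ / (2 * ν) * (aa ^ 2 + bb ^ 2) := by
  rw [div_mul_eq_mul_div, le_div_iff₀ (by positivity)]
  nlinarith [mul_le_mul_of_nonneg_left hkey (mul_nonneg hγ0 ha0),
    mul_nonneg hγ0 (sq_nonneg (aa - bb))]

lemma myT3 (s bb r γ L ν : ℝ) (hs0 : 0 ≤ s) (hγ0 : 0 ≤ γ) (hL : 0 ≤ L)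
    (hν : 0 < ν) (hkey : ν * r ≤ bb) (hr0 : 0 ≤ r) (hs : s ≤ (1 + γ) * r) :
    L / 2 * s ^ 2 ≤ L * (1 + γ) ^ 2 / (2 * ν ^ 2) * bb ^ 2 := by
  rw [div_mul_eq_mul_div, div_mul_eq_mul_div, le_div_iff₀ (by positivity)]
  have hs2 : s ^ 2 ≤ ((1 + γ) * r) ^ 2 := by nlinarith
  have hb2 : (ν * r) ^ 2 ≤ bb ^ 2 := by nlinarith [mul_nonneg hν.le hr0]
  nlinarith [mul_le_mul_of_nonneg_left hs2 (mul_nonneg hL (sq_nonneg ν)),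
    mul_le_mul_of_nonneg_left hb2 (mul_nonneg hL (sq_nonneg (1 + γ)))]

set_option maxHeartbeats 1000000 in
/-- One-device inexact descent bound (non-convex case).  If `F k`
has `L`-Lipschitz gradient and is `λ`-weakly convex (`w ↦ F k w + (λ/2)‖w‖²` is
convex), `μ > λ ≥ 0`, `f` has `L`-Lipschitz gradient, `w̲` is the exact minimizer of
the FedDANE subproblem, and `w` is a `γ`-inexact minimizer, then
`f(w) ≤ f(w₀) - ⟪∇f(w₀), g⟫/μ + (L/(2μ(μ-λ)) + γ/(2(μ-λ)))(‖∇f(w₀)‖² + ‖g‖²)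
        + (L(1+γ)²/(2(μ-λ)²))‖g‖²`. -/
theorem feddane_inexact_descent_nonconvex {d N : ℕ}
    (F : Fin N → EuclideanSpace ℝ (Fin d) → ℝ) (hF : ∀ k, ContDiff ℝ 1 (F k))
    (p : Fin N → ℝ) (hp : ∀ k, 0 ≤ p k) (hpsum : ∑ k, p k = 1)
    (f : EuclideanSpace ℝ (Fin d) → ℝ) (hf : f = fun w => ∑ k, p k * F k w)
    (w₀ g : EuclideanSpace ℝ (Fin d)) (lam μ γ L : ℝ)
    (hlam : 0 ≤ lam) (hμ : lam < μ) (hγ0 : 0 ≤ γ) (hγ1 : γ < 1) (hL : 0 ≤ L)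
    (k : Fin N)
    (hweak : ConvexOn ℝ Set.univ fun w => F k w + lam / 2 * ‖w‖ ^ 2)
    (hFlip : ∀ x y, ‖gradient (F k) x - gradient (F k) y‖ ≤ L * ‖x - y‖)
    (hflip : ∀ x y, ‖gradient f x - gradient f y‖ ≤ L * ‖x - y‖)
    (P : EuclideanSpace ℝ (Fin d) → ℝ)
    (hP : P = fun w =>
      F k w + ⟪g - gradient (F k) w₀, w - w₀⟫ + μ / 2 * ‖w - w₀‖ ^ 2)
    (wbar w : EuclideanSpace ℝ (Fin d))
    (hmin : ∀ v, P wbar ≤ P v)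
    (hinexact : ‖w - wbar‖ ≤ γ * ‖wbar - w₀‖) :
    f w ≤ f w₀ - ⟪gradient f w₀, g⟫ / μ +
        (L / (2 * μ * (μ - lam)) + γ / (2 * (μ - lam))) *
          (‖gradient f w₀‖ ^ 2 + ‖g‖ ^ 2) +
        L * (1 + γ) ^ 2 / (2 * (μ - lam) ^ 2) * ‖g‖ ^ 2 := by
  have hμ0 : (0:ℝ) < μ := lt_of_le_of_lt hlam hμ
  have hν : (0:ℝ) < μ - lam := sub_pos.mpr hμ
  have hFkdiff : ∀ x, HasGradientAt (F k) (gradient (F k) x) x := fun x =>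
    (((hF k).differentiable one_ne_zero) x).hasGradientAt
  have hfdiff : ∀ x, HasGradientAt f (gradient f x) x := by
    have hd : Differentiable ℝ f := by
      rw [hf]
      exact Differentiable.fun_sum fun i _ => ((hF i).differentiable one_ne_zero).const_mul (p i)
    exact fun x => (hd x).hasGradientAt
  -- gradient of P at wbar, and first-order optimality
  have hq : HasGradientAt (fun w : EuclideanSpace ℝ (Fin d) => μ / 2 * ‖w - w₀‖ ^ 2)
      (μ • (wbar - w₀)) wbar := by
    have h1 := myHasGradientAt_quad (μ / 2) w₀ wbar
    have h2 : (2 * (μ / 2)) = μ := by ring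
    rwa [h2] at h1
  have hPgrad : HasGradientAt P
      (gradient (F k) wbar + (g - gradient (F k) w₀) + μ • (wbar - w₀)) wbar := by
    rw [hP]
    exact myHasGradientAt_add (myHasGradientAt_add (hFkdiff wbar)
      (myHasGradientAt_linear (g - gradient (F k) w₀) w₀ wbar)) hq
  have hlocmin : IsLocalMin P wbar := Filter.Eventually.of_forall hmin
  have hfzero := hlocmin.fderiv_eq_zero
  have hopt : gradient (F k) wbar + (g - gradient (F k) w₀) + μ • (wbar - w₀) = 0 := by
    have h1 := hPgrad.hasFDerivAt.fderiv
    apply (InnerProductSpace.toDual ℝ (EuclideanSpace ℝ (Fin d))).injective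
    rw [map_zero]
    exact h1.symm.trans hfzero
  have hw : μ • (wbar - w₀) = (gradient (F k) w₀ - gradient (F k) wbar) - g := by
    have h2 := eq_neg_of_add_eq_zero_right hopt
    rw [h2]; module
  -- weak convexity gradient monotonicity
  have hGgrad : ∀ x : EuclideanSpace ℝ (Fin d),
      HasGradientAt (fun w => F k w + lam / 2 * ‖w‖ ^ 2)
        (gradient (F k) x + lam • x) x := by
    intro x
    have hq2 : HasGradientAt (fun w : EuclideanSpace ℝ (Fin d) => lam / 2 * ‖w‖ ^ 2)
        (lam • x) x := by
      have h1 := myHasGradientAt_normsq (lam / 2) x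
      have h2 : (2 * (lam / 2)) = lam := by ring
      rwa [h2] at h1
    exact myHasGradientAt_add (hFkdiff x) hq2
  have hmono : ⟪gradient (F k) w₀ - gradient (F k) wbar, wbar - w₀⟫ ≤
      lam * ‖wbar - w₀‖ ^ 2 := by
    have h1 := my_first_order _ _ hGgrad hweak w₀ wbar
    have h2 := my_first_order _ _ hGgrad hweak wbar w₀
    have e1 : ⟪gradient (F k) wbar + lam • wbar, w₀ - wbar⟫
        = -⟪gradient (F k) wbar + lam • wbar, wbar - w₀⟫ := by
      rw [← inner_neg_right]; congr 1; abel
    rw [e1] at h2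
    have key : ⟪gradient (F k) w₀ + lam • w₀, wbar - w₀⟫
        - ⟪gradient (F k) wbar + lam • wbar, wbar - w₀⟫ ≤ 0 := by linarith
    rw [← inner_sub_left] at key
    have e2 : (gradient (F k) w₀ + lam • w₀) - (gradient (F k) wbar + lam • wbar)
        = (gradient (F k) w₀ - gradient (F k) wbar) + lam • (w₀ - wbar) := by module
    rw [e2, inner_add_left] at key
    have e3 : ⟪lam • (w₀ - wbar), wbar - w₀⟫ = -(lam * ‖wbar - w₀‖ ^ 2) := by
      rw [real_inner_smul_left]
      have e4 : (w₀ - wbar) = -(wbar - w₀) := by abel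
      rw [e4, inner_neg_left, real_inner_self_eq_norm_sq]
      ring
    rw [e3] at key
    linarith
  -- key distance bound
  set r := ‖wbar - w₀‖ with hrdef
  have hr0 : 0 ≤ r := norm_nonneg _
  have hkey : (μ - lam) * r ≤ ‖g‖ := by
    have h1 : ⟪μ • (wbar - w₀), wbar - w₀⟫
        = ⟪gradient (F k) w₀ - gradient (F k) wbar - g, wbar - w₀⟫ := by rw [hw]
    rw [real_inner_smul_left, real_inner_self_eq_norm_sq, inner_sub_left] at h1
    have h2 : -⟪g, wbar - w₀⟫ ≤ ‖g‖ * r := by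
      have h3 := abs_real_inner_le_norm g (wbar - w₀)
      have h4 := neg_abs_le ⟪g, wbar - w₀⟫
      rw [← hrdef] at h3
      linarith
    have h3 : μ * r ^ 2 ≤ lam * r ^ 2 + ‖g‖ * r := by
      rw [h1]; linarith [hmono]
    exact myT0 r ‖g‖ (μ - lam) hr0 hν (by linarith) (norm_nonneg g)
  -- assemble
  set a := ‖gradient f w₀‖ with hadef
  set b := ‖g‖ with hbdef
  have ha0 : 0 ≤ a := norm_nonneg _
  have hb0 : 0 ≤ b := norm_nonneg _
  have hdesc := my_descent f (gradient f) hfdiff L hflip w₀ w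
  have hsplit : ⟪gradient f w₀, w - w₀⟫ =
      ⟪gradient f w₀, wbar - w₀⟫ + ⟪gradient f w₀, w - wbar⟫ := by
    rw [← inner_add_right]; congr 1; abel
  have hFlipbound : ⟪gradient f w₀, gradient (F k) w₀ - gradient (F k) wbar⟫
      ≤ a * (L * r) := by
    calc ⟪gradient f w₀, gradient (F k) w₀ - gradient (F k) wbar⟫
        ≤ a * ‖gradient (F k) w₀ - gradient (F k) wbar‖ := real_inner_le_norm _ _
      _ ≤ a * (L * r) := by
          have h1 := hFlip w₀ wbar
          rw [norm_sub_rev w₀ wbar, ← hrdef] at h1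
          exact mul_le_mul_of_nonneg_left h1 (norm_nonneg _)
  have hbar : μ * ⟪gradient f w₀, wbar - w₀⟫ ≤ a * (L * r) - ⟪gradient f w₀, g⟫ := by
    have h1 : ⟪gradient f w₀, μ • (wbar - w₀)⟫
        = ⟪gradient f w₀, gradient (F k) w₀ - gradient (F k) wbar - g⟫ := by rw [hw]
    rw [real_inner_smul_right] at h1
    have h2 : ⟪gradient f w₀, gradient (F k) w₀ - gradient (F k) wbar - g⟫
        = ⟪gradient f w₀, gradient (F k) w₀ - gradient (F k) wbar⟫
          - ⟪gradient f w₀, g⟫ := inner_sub_right _ _ _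
    rw [h2] at h1
    linarith [hFlipbound]
  have hX : ⟪gradient f w₀, wbar - w₀⟫
      ≤ a * (L * r) / μ - ⟪gradient f w₀, g⟫ / μ := by
    rw [← sub_div]
    exact (le_div_iff₀ hμ0).mpr (by linarith [hbar])
  have hY : ⟪gradient f w₀, w - wbar⟫ ≤ a * (γ * r) := by
    calc ⟪gradient f w₀, w - wbar⟫ ≤ a * ‖w - wbar‖ := real_inner_le_norm _ _
      _ ≤ a * (γ * r) := mul_le_mul_of_nonneg_left hinexact (norm_nonneg _)
  have hZ : ‖w - w₀‖ ≤ (1 + γ) * r := by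
    have h1 := dist_triangle w wbar w₀
    rw [dist_eq_norm, dist_eq_norm, dist_eq_norm, ← hrdef] at h1
    linarith
  have hT1 : a * (L * r) / μ ≤ L / (2 * μ * (μ - lam)) * (a ^ 2 + b ^ 2) := by
    exact myT1 a b r L μ (μ - lam) ha0 hL hμ0 hν hkey hr0
  have hT2 : a * (γ * r) ≤ γ / (2 * (μ - lam)) * (a ^ 2 + b ^ 2) := by
    exact myT2 a b r γ (μ - lam) ha0 hγ0 hν hkey hr0
  have hT3 : L / 2 * ‖w - w₀‖ ^ 2 ≤ L * (1 + γ) ^ 2 / (2 * (μ - lam) ^ 2) * b ^ 2 := by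
    exact myT3 ‖w - w₀‖ b r γ L (μ - lam) (norm_nonneg _) hγ0 hL hν hkey hr0 hZ
  have hexp : (L / (2 * μ * (μ - lam)) + γ / (2 * (μ - lam))) * (a ^ 2 + b ^ 2)
      = L / (2 * μ * (μ - lam)) * (a ^ 2 + b ^ 2)
        + γ / (2 * (μ - lam)) * (a ^ 2 + b ^ 2) := by ring
  rw [hexp]
  linarith [hdesc, hT3]
end

section
/- Fix a base point w₀ ∈ ℝ^d, μ > 0 and γ ∈ [0,1). Suppose each F_k is convex with L-Lipschitz gradient and f has L-Lipschitz gradient. Let g be a random vector in ℝ^d with E[g] = ∇f(w₀), and for each device k and each realization of g let w_k(g) be a γ-inexact minimizer of the FedDANE subproblem P_k with base point w₀, gradient estimate g and penalty μ. Then Σ_{k=1}^N p_k E[f(w_k(g))] ≤ f(w₀) − ((2 − 3γ)/(2μ)) ‖∇f(w₀)‖² + ((2L(1+γ)² + 3L)/(2μ²)) ‖∇f(w₀)‖² + (L(1+γ)²/μ² + L/μ² + γ/μ) E[‖g − ∇f(w₀)‖²]. -/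
open scoped RealInnerProductSpace
open MeasureTheory

section Aux

variable {E : Type*} [NormedAddCommGroup E] [InnerProductSpace ℝ E] [CompleteSpace E]

lemma hasGradientAt_of_hasFDerivAt' {f : E → ℝ} {D : E →L[ℝ] ℝ} {x a : E}
    (h : HasFDerivAt f D x) (ha : ∀ y, D y = ⟪a, y⟫) : HasGradientAt f a x := by
  rw [hasGradientAt_iff_hasFDerivAt]
  have : (InnerProductSpace.toDual ℝ E) a = D :=
    ContinuousLinearMap.ext fun y => by rw [InnerProductSpace.toDual_apply_apply, ha]
  rwa [this]

lemma HasGradientAt.add' {f g : E → ℝ} {a b x : E}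
    (hf : HasGradientAt f a x) (hg : HasGradientAt g b x) :
    HasGradientAt (fun w => f w + g w) (a + b) x := by
  rw [hasGradientAt_iff_hasFDerivAt] at *
  rw [map_add]; exact hf.add hg

lemma hasGradientAt_inner_sub (c w₀ y : E) :
    HasGradientAt (fun wv => ⟪c, wv - w₀⟫) c y := by
  have h1 : HasFDerivAt (fun wv : E => wv - w₀) (ContinuousLinearMap.id ℝ E) y :=
    (hasFDerivAt_id y).sub_const w₀
  have h2 : HasFDerivAt (fun wv : E => ⟪c, wv - w₀⟫) (innerSL ℝ c) y := by
    exact ((innerSL ℝ c).hasFDerivAt.comp y h1)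
  exact hasGradientAt_of_hasFDerivAt' h2 (fun z => by simp)

lemma hasGradientAt_quad (μ : ℝ) (w₀ y : E) :
    HasGradientAt (fun wv => μ / 2 * ‖wv - w₀‖ ^ 2) (μ • (y - w₀)) y := by
  have hfun : (fun wv : E => μ / 2 * ‖wv - w₀‖ ^ 2)
      = fun wv => μ / 2 * ⟪wv - w₀, wv - w₀⟫ := by
    funext wv; rw [real_inner_self_eq_norm_sq]
  rw [hfun]
  have h1 : HasFDerivAt (fun wv : E => wv - w₀) (ContinuousLinearMap.id ℝ E) y :=
    (hasFDerivAt_id y).sub_const w₀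
  have h2 := (h1.inner ℝ h1).const_mul (μ / 2)
  refine hasGradientAt_of_hasFDerivAt' h2 (fun z => ?_)
  simp [fderivInnerCLM_apply, real_inner_smul_left]
  rw [real_inner_comm]
  ring

/-- First-order condition for a differentiable convex function. -/
lemma convex_first_order {F : E → ℝ} (hc : ConvexOn ℝ Set.univ F) (hd : ContDiff ℝ 1 F)
    (x y : E) : F x + ⟪gradient F x, y - x⟫ ≤ F y := by
  set φ : ℝ → ℝ := fun t => F (x + t • (y - x)) with hφ
  have hline : ∀ t : ℝ, HasDerivAt (fun s : ℝ => x + s • (y - x)) (y - x) t := by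
    intro t
    simpa using ((hasDerivAt_id t).smul_const (y - x)).const_add x
  have hder : HasDerivAt φ ⟪gradient F x, y - x⟫ 0 := by
    have hF : HasFDerivAt F ((InnerProductSpace.toDual ℝ E) (gradient F x)) x :=
      ((hd.differentiable one_ne_zero x).hasGradientAt).hasFDerivAt
    have hF0 : HasFDerivAt F ((InnerProductSpace.toDual ℝ E) (gradient F x))
        (x + (0:ℝ) • (y - x)) := by simpa using hF
    have := hF0.comp_hasDerivAt 0 (hline 0)
    rw [InnerProductSpace.toDual_apply_apply] at this; exact this
  have hφc : ConvexOn ℝ Set.univ φ := by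
    have := hc.comp_affineMap (AffineMap.lineMap x y)
    have heq : φ = F ∘ (AffineMap.lineMap x y) := by
      funext t; show F _ = F _
      congr 1
      simp [AffineMap.lineMap_apply, smul_sub]
      module
    rw [heq]
    simpa using this
  have hslope := hφc.le_slope_of_hasDerivWithinAt_Ioi (Set.mem_univ 0) (Set.mem_univ 1)
    one_pos (hder.hasDerivWithinAt)
  have hs : slope φ 0 1 = F y - F x := by
    simp [slope, φ]
  rw [hs] at hslope
  linarith

/-- Descent lemma for a function with Lipschitz gradient. -/
lemma descent_lemma {f : E → ℝ} (hd : ContDiff ℝ 1 f) {L : ℝ} (hL : 0 ≤ L)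
    (hlip : ∀ x y, ‖gradient f x - gradient f y‖ ≤ L * ‖x - y‖) (x y : E) :
    f y ≤ f x + ⟪gradient f x, y - x⟫ + L / 2 * ‖y - x‖ ^ 2 := by
  set v := y - x with hv
  set φ : ℝ → ℝ := fun t => f (x + t • v) with hφ
  set φ' : ℝ → ℝ := fun t => ⟪gradient f (x + t • v), v⟫ with hφ'
  have hline : ∀ t : ℝ, HasDerivAt (fun s : ℝ => x + s • v) v t := by
    intro t; simpa using ((hasDerivAt_id t).smul_const v).const_add x
  have hder : ∀ t : ℝ, HasDerivAt φ (φ' t) t := by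
    intro t
    have hF : HasFDerivAt f ((InnerProductSpace.toDual ℝ E) (gradient f (x + t • v)))
        (x + t • v) := ((hd.differentiable one_ne_zero _).hasGradientAt).hasFDerivAt
    have := hF.comp_hasDerivAt t (hline t)
    rw [InnerProductSpace.toDual_apply_apply] at this; exact this
  have hgradcont : Continuous (gradient f) := by
    have : LipschitzWith (Real.toNNReal L) (gradient f) := by
      apply LipschitzWith.of_dist_le_mul
      intro a b
      rw [dist_eq_norm, dist_eq_norm]
      simpa [Real.coe_toNNReal L hL] using hlip a b
    exact this.continuous
  have hφ'cont : Continuous φ' := by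
    apply Continuous.inner
    · exact hgradcont.comp (by continuity)
    · exact continuous_const
  have hFTC : ∫ t in (0:ℝ)..1, φ' t = φ 1 - φ 0 :=
    intervalIntegral.integral_eq_sub_of_hasDerivAt (fun t _ => hder t)
      (hφ'cont.intervalIntegrable 0 1)
  have hmono : ∫ t in (0:ℝ)..1, φ' t ≤ ∫ t in (0:ℝ)..1, (φ' 0 + L * ‖v‖ ^ 2 * t) := by
    apply intervalIntegral.integral_mono_on zero_le_one
      (hφ'cont.intervalIntegrable 0 1)
      (((continuous_const.add (continuous_const.mul continuous_id')) :
        Continuous fun t : ℝ => φ' 0 + L * ‖v‖ ^ 2 * t).intervalIntegrable 0 1)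
    intro t ht
    have h1 : φ' t - φ' 0 = ⟪gradient f (x + t • v) - gradient f x, v⟫ := by
      simp [φ', inner_sub_left]
    have h2 : ⟪gradient f (x + t • v) - gradient f x, v⟫ ≤ L * t * ‖v‖ ^ 2 := by
      calc ⟪gradient f (x + t • v) - gradient f x, v⟫
          ≤ ‖gradient f (x + t • v) - gradient f x‖ * ‖v‖ := real_inner_le_norm _ _
        _ ≤ (L * ‖(x + t • v) - x‖) * ‖v‖ := by
            apply mul_le_mul_of_nonneg_right (hlip _ _) (norm_nonneg v)
        _ = L * t * ‖v‖ ^ 2 := by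
            rw [add_sub_cancel_left, norm_smul]
            rw [Real.norm_eq_abs, abs_of_nonneg ht.1]
            ring
    have h3 := h1 ▸ h2
    show φ' t ≤ φ' 0 + L * ‖v‖ ^ 2 * t
    linarith [h3]
  have hrhs : ∫ t in (0:ℝ)..1, (φ' 0 + L * ‖v‖ ^ 2 * t) = φ' 0 + L / 2 * ‖v‖ ^ 2 := by
    rw [intervalIntegral.integral_add intervalIntegrable_const
      ((by fun_prop :
        Continuous fun t : ℝ => L * ‖v‖ ^ 2 * t).intervalIntegrable 0 1)]
    rw [intervalIntegral.integral_const_mul]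
    simp [integral_id]
    ring
  have h0 : φ 0 = f x := by simp [φ]
  have h1 : φ 1 = f y := by simp [φ, hv]
  have hφ'0 : φ' 0 = ⟪gradient f x, y - x⟫ := by simp [φ', hv]
  rw [hFTC] at hmono
  rw [hrhs, h0, h1, hφ'0] at hmono
  linarith

end Aux

set_option maxHeartbeats 2000000 in
/-- Expected descent bound (convex case).  Let `g : Ω → ℝ^d` be a
random vector with `E[g] = ∇f(w₀)`, and for each device `k` and each realization
`g ω` let `w k ω` be a `γ`-inexact minimizer of the FedDANE subproblem `P k (g ω)`
(with exact minimizer `wbar k ω`).  Then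
`∑ k, p k * E[f(w k)] ≤ f(w₀) - ((2-3γ)/(2μ))‖∇f(w₀)‖²
  + ((2L(1+γ)² + 3L)/(2μ²))‖∇f(w₀)‖²
  + (L(1+γ)²/μ² + L/μ² + γ/μ) E[‖g - ∇f(w₀)‖²]`. -/
theorem feddane_expected_descent_convex {d N : ℕ}
    {Ω : Type*} [MeasurableSpace Ω] (ℙ : Measure Ω) [IsProbabilityMeasure ℙ]
    (F : Fin N → EuclideanSpace ℝ (Fin d) → ℝ) (hF : ∀ k, ContDiff ℝ 1 (F k))
    (p : Fin N → ℝ) (hp : ∀ k, 0 ≤ p k) (hpsum : ∑ k, p k = 1)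
    (f : EuclideanSpace ℝ (Fin d) → ℝ) (hf : f = fun w => ∑ k, p k * F k w)
    (w₀ : EuclideanSpace ℝ (Fin d)) (μ γ L : ℝ)
    (hμ : 0 < μ) (hγ0 : 0 ≤ γ) (hγ1 : γ < 1) (hL : 0 ≤ L)
    (hconv : ∀ k, ConvexOn ℝ Set.univ (F k))
    (hFlip : ∀ k x y, ‖gradient (F k) x - gradient (F k) y‖ ≤ L * ‖x - y‖)
    (hflip : ∀ x y, ‖gradient f x - gradient f y‖ ≤ L * ‖x - y‖)
    (g : Ω → EuclideanSpace ℝ (Fin d))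
    (hg_int : Integrable g ℙ)
    (hg_mean : (∫ ω, g ω ∂ℙ) = gradient f w₀)
    (P : Fin N → EuclideanSpace ℝ (Fin d) → EuclideanSpace ℝ (Fin d) → ℝ)
    (hP : P = fun k gv w =>
      F k w + ⟪gv - gradient (F k) w₀, w - w₀⟫ + μ / 2 * ‖w - w₀‖ ^ 2)
    (w wbar : Fin N → Ω → EuclideanSpace ℝ (Fin d))
    (hmin : ∀ k ω v, P k (g ω) (wbar k ω) ≤ P k (g ω) v)
    (hinexact : ∀ k ω, ‖w k ω - wbar k ω‖ ≤ γ * ‖wbar k ω - w₀‖)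
    (hfw_int : ∀ k, Integrable (fun ω => f (w k ω)) ℙ)
    (hvar_int : Integrable (fun ω => ‖g ω - gradient f w₀‖ ^ 2) ℙ) :
    (∑ k, p k * ∫ ω, f (w k ω) ∂ℙ) ≤
      f w₀ - (2 - 3 * γ) / (2 * μ) * ‖gradient f w₀‖ ^ 2 +
        (2 * L * (1 + γ) ^ 2 + 3 * L) / (2 * μ ^ 2) * ‖gradient f w₀‖ ^ 2 +
        (L * (1 + γ) ^ 2 / μ ^ 2 + L / μ ^ 2 + γ / μ) *
          ∫ ω, ‖g ω - gradient f w₀‖ ^ 2 ∂ℙ := by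
  subst hP
  set G := gradient f w₀ with hG
  have hfC1 : ContDiff ℝ 1 f := by
    rw [hf]
    exact ContDiff.sum fun k _ => contDiff_const.mul (hF k)
  -- stationarity of the exact minimizer
  have hstat : ∀ k ω, g ω + (gradient (F k) (wbar k ω) - gradient (F k) w₀)
      + μ • (wbar k ω - w₀) = 0 := by
    intro k ω
    have hga : HasGradientAt (fun wv => F k wv + ⟪g ω - gradient (F k) w₀, wv - w₀⟫ +
        μ / 2 * ‖wv - w₀‖ ^ 2)
        (gradient (F k) (wbar k ω) + (g ω - gradient (F k) w₀) + μ • (wbar k ω - w₀))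
        (wbar k ω) :=
      (((hF k).differentiable one_ne_zero _).hasGradientAt.add'
        (hasGradientAt_inner_sub _ w₀ _)).add' (hasGradientAt_quad μ w₀ _)
    have hloc : IsLocalMin (fun wv => F k wv + ⟪g ω - gradient (F k) w₀, wv - w₀⟫ +
        μ / 2 * ‖wv - w₀‖ ^ 2) (wbar k ω) :=
      Filter.Eventually.of_forall fun v => hmin k ω v
    have h0 := hloc.hasFDerivAt_eq_zero hga.hasFDerivAt
    have h0' : gradient (F k) (wbar k ω) + (g ω - gradient (F k) w₀)
        + μ • (wbar k ω - w₀) = 0 :=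
      (LinearIsometryEquiv.map_eq_zero_iff _).mp h0
    rw [← h0']; abel
  -- pointwise key inequality
  have hkey : ∀ k ω, f (w k ω) ≤
      (f w₀ + (3*L/2 + 3*γ*μ/2 + L*(1+γ)^2 - μ)/μ^2 * ‖G‖^2)
      - (1/μ) * ⟪G, g ω - G⟫ + (L/2 + γ*μ/2 + L*(1+γ)^2)/μ^2 * ‖g ω - G‖^2 := by
    intro k ω
    set u := wbar k ω - w₀ with hu
    set eb := gradient (F k) (wbar k ω) - gradient (F k) w₀ with heb
    have ha0 : (0:ℝ) ≤ ‖G‖ := norm_nonneg _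
    have hb0 : (0:ℝ) ≤ ‖g ω - G‖ := norm_nonneg _
    have hr0 : (0:ℝ) ≤ ‖u‖ := norm_nonneg _
    have hvec : g ω + eb + μ • u = 0 := hstat k ω
    have hsc1 : ⟪G, g ω⟫ + ⟪G, eb⟫ + μ * ⟪G, u⟫ = 0 := by
      have h : ⟪G, g ω + eb + μ • u⟫ = 0 := by rw [hvec, inner_zero_right]
      rw [inner_add_right, inner_add_right, real_inner_smul_right] at h
      linarith
    have hsc2 : ⟪g ω, u⟫ + ⟪eb, u⟫ + μ * (‖u‖ * ‖u‖) = 0 := by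
      have h : ⟪g ω + eb + μ • u, u⟫ = 0 := by rw [hvec, inner_zero_left]
      rw [inner_add_left, inner_add_left, real_inner_smul_left,
        real_inner_self_eq_norm_mul_norm] at h
      linarith
    have hmono : 0 ≤ ⟪eb, u⟫ := by
      have h1 := convex_first_order (hconv k) (hF k) w₀ (wbar k ω)
      have h2 := convex_first_order (hconv k) (hF k) (wbar k ω) w₀
      rw [← hu] at h1
      have h3 : w₀ - wbar k ω = -u := by rw [hu]; abel
      rw [h3, inner_neg_right] at h2
      have h4 : ⟪eb, u⟫ = ⟪gradient (F k) (wbar k ω), u⟫ - ⟪gradient (F k) w₀, u⟫ := by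
        rw [heb, inner_sub_left]
      linarith
    have hgnorm : ‖g ω‖ ≤ ‖G‖ + ‖g ω - G‖ := by
      have h5 : G + (g ω - G) = g ω := by abel
      calc ‖g ω‖ = ‖G + (g ω - G)‖ := by rw [h5]
        _ ≤ ‖G‖ + ‖g ω - G‖ := norm_add_le _ _
    have hμr : μ * ‖u‖ ≤ ‖G‖ + ‖g ω - G‖ := by
      rcases eq_or_lt_of_le hr0 with h | h
      · rw [← h, mul_zero]; positivity
      · have h6 := (abs_le.mp (abs_real_inner_le_norm (g ω) u)).1
        have h7 : μ * (‖u‖ * ‖u‖) ≤ ‖g ω‖ * ‖u‖ := by linarith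
        have h8 : ‖g ω‖ * ‖u‖ ≤ (‖G‖ + ‖g ω - G‖) * ‖u‖ :=
          mul_le_mul_of_nonneg_right hgnorm hr0
        exact le_of_mul_le_mul_right (by nlinarith) h
    have heb_le : ‖eb‖ ≤ L * ‖u‖ := by
      have h := hFlip k (wbar k ω) w₀
      rw [← hu, ← heb] at h
      exact h
    have hGeb : -⟪G, eb⟫ ≤ ‖G‖ * (L * ‖u‖) := by
      have h6 := (abs_le.mp (abs_real_inner_le_norm G eb)).1
      nlinarith [mul_le_mul_of_nonneg_left heb_le ha0]
    have hIG : ⟪G, g ω⟫ = ‖G‖^2 + ⟪G, g ω - G⟫ := by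
      have h7 : ⟪G, g ω⟫ - ⟪G, G⟫ = ⟪G, g ω - G⟫ := (inner_sub_right _ _ _).symm
      have h8 : ⟪G, G⟫ = ‖G‖^2 := real_inner_self_eq_norm_sq G
      linarith
    have H1 : μ * ⟪G, u⟫ ≤ -(‖G‖^2) - ⟪G, g ω - G⟫ + ‖G‖ * (L * ‖u‖) := by linarith
    have hdesc := descent_lemma hfC1 hL hflip w₀ (w k ω)
    have hvdec : w k ω - w₀ = (w k ω - wbar k ω) + u := by rw [hu]; abel
    have hsplit : ⟪G, w k ω - w₀⟫ = ⟪G, w k ω - wbar k ω⟫ + ⟪G, u⟫ := by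
      rw [hvdec, inner_add_right]
    have h9 : ‖w k ω - wbar k ω‖ ≤ γ * ‖u‖ := by
      have h := hinexact k ω
      rw [← hu] at h
      exact h
    have hCS2 : ⟪G, w k ω - wbar k ω⟫ ≤ ‖G‖ * (γ * ‖u‖) := by
      have h10 := real_inner_le_norm G (w k ω - wbar k ω)
      nlinarith [mul_le_mul_of_nonneg_left h9 ha0]
    have hvnorm : ‖w k ω - w₀‖ ≤ (1 + γ) * ‖u‖ := by
      rw [hvdec]
      refine (norm_add_le _ _).trans ?_
      linarith
    have hv2 : ‖w k ω - w₀‖^2 ≤ ((1+γ)*‖u‖)^2 := pow_le_pow_left₀ (norm_nonneg _) hvnorm 2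
    have H3 : f (w k ω) ≤ f w₀ + ⟪G, u⟫ + ‖G‖ * (γ * ‖u‖) + L/2 * ((1+γ)*‖u‖)^2 := by
      have h10 : L/2 * ‖w k ω - w₀‖^2 ≤ L/2 * ((1+γ)*‖u‖)^2 :=
        mul_le_mul_of_nonneg_left hv2 (by linarith)
      rw [hsplit] at hdesc
      linarith
    have S1 : μ^2 * f (w k ω) ≤
        μ^2 * (f w₀ + ⟪G, u⟫ + ‖G‖*(γ*‖u‖) + L/2*((1+γ)*‖u‖)^2) :=
      mul_le_mul_of_nonneg_left H3 (sq_nonneg μ)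
    have S2 : μ * (μ * ⟪G, u⟫) ≤ μ * (-(‖G‖^2) - ⟪G, g ω - G⟫ + ‖G‖*(L*‖u‖)) :=
      mul_le_mul_of_nonneg_left H1 hμ.le
    have S3 : (‖G‖*L) * (μ*‖u‖) ≤ (‖G‖*L) * (‖G‖+‖g ω - G‖) :=
      mul_le_mul_of_nonneg_left hμr (by positivity)
    have S4 : (‖G‖*γ*μ) * (μ*‖u‖) ≤ (‖G‖*γ*μ) * (‖G‖+‖g ω - G‖) :=
      mul_le_mul_of_nonneg_left hμr (by positivity)
    have hq3 : (μ*‖u‖)^2 ≤ (‖G‖+‖g ω - G‖)^2 := pow_le_pow_left₀ (by positivity) hμr 2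
    have S5 : (L/2*(1+γ)^2) * (μ*‖u‖)^2 ≤ (L/2*(1+γ)^2) * (‖G‖+‖g ω - G‖)^2 :=
      mul_le_mul_of_nonneg_left hq3 (by positivity)
    have hq4 : ‖G‖*(‖G‖+‖g ω - G‖) ≤ (3*‖G‖^2 + ‖g ω - G‖^2)/2 := by
      nlinarith [sq_nonneg (‖G‖ - ‖g ω - G‖)]
    have S6 : L * (‖G‖*(‖G‖+‖g ω - G‖)) ≤ L * ((3*‖G‖^2+‖g ω - G‖^2)/2) :=
      mul_le_mul_of_nonneg_left hq4 hL
    have S7 : (γ*μ) * (‖G‖*(‖G‖+‖g ω - G‖)) ≤ (γ*μ) * ((3*‖G‖^2+‖g ω - G‖^2)/2) :=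
      mul_le_mul_of_nonneg_left hq4 (by positivity)
    have hq5 : (‖G‖+‖g ω - G‖)^2 ≤ 2*‖G‖^2 + 2*‖g ω - G‖^2 := by
      nlinarith [sq_nonneg (‖G‖ - ‖g ω - G‖)]
    have S8 : (L/2*(1+γ)^2) * (‖G‖+‖g ω - G‖)^2 ≤ (L/2*(1+γ)^2)*(2*‖G‖^2+2*‖g ω - G‖^2) :=
      mul_le_mul_of_nonneg_left hq5 (by positivity)
    have keyμ : μ^2 * f (w k ω) ≤ μ^2 * f w₀
        + (3*L/2 + 3*γ*μ/2 + L*(1+γ)^2 - μ) * ‖G‖^2 - μ * ⟪G, g ω - G⟫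
        + (L/2 + γ*μ/2 + L*(1+γ)^2) * ‖g ω - G‖^2 := by
      linarith [S1, S2, S3, S4, S5, S6, S7, S8]
    have hμ2 : (0:ℝ) < μ^2 := by positivity
    rw [← mul_le_mul_iff_right₀ hμ2]
    refine keyμ.trans (le_of_eq ?_)
    field_simp
  -- integrate
  have hsub : Integrable (fun ω => g ω - G) ℙ := hg_int.sub (integrable_const G)
  have hI : Integrable (fun ω => ⟪G, g ω - G⟫) ℙ := hsub.const_inner G
  have hIval : ∫ ω, ⟪G, g ω - G⟫ ∂ℙ = 0 := by
    rw [integral_inner hsub G]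
    rw [integral_sub hg_int (integrable_const G), integral_const]
    simp [hg_mean, ← hG]
  set A := (3*L/2 + 3*γ*μ/2 + L*(1+γ)^2 - μ)/μ^2 with hA
  set Cb := (L/2 + γ*μ/2 + L*(1+γ)^2)/μ^2 with hCb
  set V := ∫ ω, ‖g ω - G‖^2 ∂ℙ with hV
  have hV0 : 0 ≤ V := by
    rw [hV]
    exact integral_nonneg fun ω => by positivity
  have hbound : ∀ k, ∫ ω, f (w k ω) ∂ℙ ≤ (f w₀ + A * ‖G‖^2) + Cb * V := by
    intro k
    have hRint : Integrable
        (fun ω => (f w₀ + A * ‖G‖^2) - (1/μ) * ⟪G, g ω - G⟫ + Cb * ‖g ω - G‖^2) ℙ :=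
      ((integrable_const _).sub (hI.const_mul (1/μ))).add (hvar_int.const_mul Cb)
    have hle := integral_mono (hfw_int k) hRint (fun ω => hkey k ω)
    have h1 : Integrable (fun ω => f w₀ + A * ‖G‖^2 - 1/μ * ⟪G, g ω - G⟫) ℙ :=
      (integrable_const _).sub (hI.const_mul (1/μ))
    have h2 : Integrable (fun ω => Cb * ‖g ω - G‖^2) ℙ := hvar_int.const_mul Cb
    have h3 : Integrable (fun ω => 1/μ * ⟪G, g ω - G⟫) ℙ := hI.const_mul (1/μ)
    rw [integral_add h1 h2, integral_sub (integrable_const _) h3,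
      integral_const, integral_const_mul, integral_const_mul, hIval] at hle
    simp only [measure_univ, ENNReal.toReal_one, probReal_univ, one_smul, mul_zero, sub_zero] at hle
    rw [← hV] at hle
    linarith
  have hsum : (∑ k, p k * ∫ ω, f (w k ω) ∂ℙ) ≤ (f w₀ + A * ‖G‖^2) + Cb * V := by
    calc (∑ k, p k * ∫ ω, f (w k ω) ∂ℙ)
        ≤ ∑ k, p k * ((f w₀ + A * ‖G‖^2) + Cb * V) :=
          Finset.sum_le_sum fun k _ => mul_le_mul_of_nonneg_left (hbound k) (hp k)
      _ = (f w₀ + A * ‖G‖^2) + Cb * V := by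
          rw [← Finset.sum_mul, hpsum, one_mul]
  have hAeq : A = -((2 - 3*γ)/(2*μ)) + (2*L*(1+γ)^2 + 3*L)/(2*μ^2) := by
    rw [hA]; field_simp; ring
  have hCle : Cb ≤ L*(1+γ)^2/μ^2 + L/μ^2 + γ/μ := by
    have hdiff : L*(1+γ)^2/μ^2 + L/μ^2 + γ/μ - Cb = (L/2 + γ*μ/2)/μ^2 := by
      rw [hCb]; field_simp; ring
    nlinarith [hdiff, div_nonneg (by positivity : (0:ℝ) ≤ L/2 + γ*μ/2) (by positivity : (0:ℝ) ≤ μ^2)]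
  have hfinal : Cb * V ≤ (L*(1+γ)^2/μ^2 + L/μ^2 + γ/μ) * V :=
    mul_le_mul_of_nonneg_right hCle hV0
  nlinarith [hsum, hfinal, hAeq, sq_nonneg ‖G‖]
end

section
/- Fix a base point w₀ ∈ ℝ^d, constants λ ≥ 0, μ > λ and γ ∈ [0,1). Suppose each F_k has L-Lipschitz gradient and is λ-weakly convex (w ↦ F_k(w) + (λ/2)‖w‖² is convex), and f has L-Lipschitz gradient. Let g be a random vector in ℝ^d with E[g] = ∇f(w₀), and for each device k and each realization of g let w_k(g) be a γ-inexact minimizer of the FedDANE subproblem P_k with base point w₀, gradient estimate g and penalty μ. Then Σ_{k=1}^N p_k E[f(w_k(g))] ≤ f(w₀) − (1/μ − 3γ/(2(μ−λ))) ‖∇f(w₀)‖² + (L(1+γ)²/(μ−λ)² + 3L/(2μ(μ−λ))) ‖∇f(w₀)‖² + (L(1+γ)²/(μ−λ)² + L/(μ(μ−λ)) + γ/(μ−λ)) E[‖g − ∇f(w₀)‖²]. -/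
open scoped RealInnerProductSpace
open MeasureTheory

section Aux

variable {E : Type*} [NormedAddCommGroup E] [InnerProductSpace ℝ E] [CompleteSpace E]

lemma aux_hasDerivAt_line {φ : E → ℝ} {φ' : E → E}
    (hder : ∀ z, HasGradientAt φ (φ' z) z) (x v : E) (t : ℝ) :
    HasDerivAt (fun s : ℝ => φ (x + s • v)) ⟪φ' (x + t • v), v⟫ t := by
  have h1 : HasDerivAt (fun s : ℝ => x + s • v) v t := by
    simpa using ((hasDerivAt_id t).smul_const v).const_add x
  have h2 : HasFDerivAt φ ((InnerProductSpace.toDual ℝ E) (φ' (x + t • v))) (x + t • v) :=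
    hasGradientAt_iff_hasFDerivAt.1 (hder _)
  simpa [InnerProductSpace.toDual_apply_apply, Function.comp_def] using h2.comp_hasDerivAt t h1

lemma aux_convex_first_order {φ : E → ℝ} {φ' : E → E}
    (hconv : ConvexOn ℝ Set.univ φ)
    (hder : ∀ z, HasGradientAt φ (φ' z) z) (x y : E) :
    φ x + ⟪φ' x, y - x⟫ ≤ φ y := by
  have hψ : ConvexOn ℝ Set.univ (fun s : ℝ => φ (x + s • (y - x))) := by
    have h := hconv.comp_affineMap (AffineMap.lineMap x y)
    have heq : (φ ∘ (AffineMap.lineMap x y)) = fun s : ℝ => φ (x + s • (y - x)) := by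
      funext s
      simp only [Function.comp_apply, AffineMap.lineMap_apply, vsub_eq_sub, vadd_eq_add]
      congr 1
      abel
    rw [heq] at h
    simpa using h
  have hd0 : HasDerivAt (fun s : ℝ => φ (x + s • (y - x))) ⟪φ' x, y - x⟫ 0 := by
    simpa using aux_hasDerivAt_line hder x (y - x) 0
  have hs := hψ.le_slope_of_hasDerivAt (Set.mem_univ (0:ℝ)) (Set.mem_univ (1:ℝ))
    zero_lt_one hd0
  rw [slope_def_field] at hs
  have h1 : x + (1:ℝ) • (y - x) = y := by rw [one_smul]; abel
  have h0 : x + (0:ℝ) • (y - x) = x := by rw [zero_smul, add_zero]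
  simp only [h1, h0] at hs
  have : ⟪φ' x, y - x⟫ ≤ φ y - φ x := by
    rw [sub_zero, div_one] at hs
    exact hs
  linarith

lemma aux_descent_s7 {φ : E → ℝ} {φ' : E → E} {L : ℝ} (hL : 0 ≤ L)
    (hder : ∀ z, HasGradientAt φ (φ' z) z)
    (hlip : ∀ a b, ‖φ' a - φ' b‖ ≤ L * ‖a - b‖) (x y : E) :
    φ y ≤ φ x + ⟪φ' x, y - x⟫ + L * ‖y - x‖ ^ 2 := by
  set v := y - x with hv
  have hline : ∀ t : ℝ, HasDerivAt (fun s : ℝ => φ (x + s • v)) ⟪φ' (x + t • v), v⟫ t :=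
    fun t => aux_hasDerivAt_line hder x v t
  have hcont : ContinuousOn (fun s : ℝ => φ (x + s • v)) (Set.Icc 0 1) :=
    fun t _ => ((hline t).continuousAt).continuousWithinAt
  obtain ⟨c, hc, hceq⟩ := exists_hasDerivAt_eq_slope (fun s : ℝ => φ (x + s • v))
    (fun t => ⟪φ' (x + t • v), v⟫) zero_lt_one hcont (fun t _ => hline t)
  have h1 : x + (1:ℝ) • v = y := by rw [one_smul, hv]; abel
  have h0 : x + (0:ℝ) • v = x := by rw [zero_smul, add_zero]
  simp only [h1, h0, sub_zero, div_one] at hceq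
  have hsplit : ⟪φ' (x + c • v), v⟫ = ⟪φ' x, v⟫ + ⟪φ' (x + c • v) - φ' x, v⟫ := by
    rw [inner_sub_left]; ring
  have hb : ⟪φ' (x + c • v) - φ' x, v⟫ ≤ L * ‖v‖ ^ 2 := by
    calc ⟪φ' (x + c • v) - φ' x, v⟫ ≤ ‖φ' (x + c • v) - φ' x‖ * ‖v‖ :=
          real_inner_le_norm _ _
      _ ≤ (L * ‖x + c • v - x‖) * ‖v‖ :=
          mul_le_mul_of_nonneg_right (hlip _ _) (norm_nonneg _)
      _ = L * c * ‖v‖ * ‖v‖ := by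
          rw [add_sub_cancel_left, norm_smul, Real.norm_eq_abs, abs_of_pos hc.1]; ring
      _ ≤ L * 1 * ‖v‖ * ‖v‖ := by
          nlinarith [mul_nonneg (sub_nonneg.2 hc.2.le)
            (mul_nonneg (mul_nonneg hL (norm_nonneg v)) (norm_nonneg v))]
      _ = L * ‖v‖ ^ 2 := by ring
  have hval : φ y - φ x = ⟪φ' (x + c • v), v⟫ := hceq.symm
  rw [hsplit] at hval
  linarith

lemma aux_gradQ {φ : E → ℝ} {φ'b : E} {b w₀ c : E} {μ : ℝ}
    (hd : HasGradientAt φ φ'b b) :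
    HasGradientAt (fun u => φ u + ⟪c, u - w₀⟫ + μ / 2 * ‖u - w₀‖ ^ 2)
      (φ'b + c + μ • (b - w₀)) b := by
  rw [hasGradientAt_iff_hasFDerivAt]
  have h1 : HasFDerivAt φ ((InnerProductSpace.toDual ℝ E) φ'b) b :=
    hasGradientAt_iff_hasFDerivAt.1 hd
  have hsub : HasFDerivAt (fun u : E => u - w₀) (ContinuousLinearMap.id ℝ E) b :=
    (hasFDerivAt_id b).sub_const w₀
  have h2 : HasFDerivAt (fun u : E => ⟪c, u - w₀⟫) (innerSL ℝ c) b := by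
    have h := HasFDerivAt.comp b ((innerSL ℝ c).hasFDerivAt (x := b - w₀)) hsub
    simpa [Function.comp_def] using h
  have h3 : HasFDerivAt (fun u : E => ‖u - w₀‖ ^ 2)
      ((2:ℕ) • (innerSL ℝ (b - w₀)).comp (ContinuousLinearMap.id ℝ E)) b := by
    simpa using hsub.norm_sq
  have h4 : HasFDerivAt (fun u => φ u + ⟪c, u - w₀⟫ + μ / 2 * ‖u - w₀‖ ^ 2) _ b :=
    (h1.add h2).add (h3.const_mul (μ / 2))
  convert h4 using 1
  · rfl
  · rfl
  ext vv
  simp [InnerProductSpace.toDual_apply_apply, inner_add_left, real_inner_smul_left]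
  ring

lemma aux_gradR {φ : E → ℝ} {φ'x : E} {x : E} {lam : ℝ} (hd : HasGradientAt φ φ'x x) :
    HasGradientAt (fun u => φ u + lam / 2 * ‖u‖ ^ 2) (φ'x + lam • x) x := by
  have h := aux_gradQ (c := (0:E)) (w₀ := (0:E)) (μ := lam) hd
  simpa using h

lemma aux_min_grad_zero {Q : E → ℝ} {b gr : E} (hmin : ∀ v, Q b ≤ Q v)
    (hd : HasGradientAt Q gr b) : gr = 0 := by
  have hloc : IsLocalMin Q b :=
    (isMinOn_iff.2 fun v _ => hmin v).isLocalMin Filter.univ_mem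
  have h0 : (InnerProductSpace.toDual ℝ E) gr = 0 :=
    hloc.hasFDerivAt_eq_zero (hasGradientAt_iff_hasFDerivAt.1 hd)
  have h1 := congrArg (InnerProductSpace.toDual ℝ E).symm h0
  simpa using h1

end Aux
set_option maxHeartbeats 2000000

/-- Expected descent bound (non-convex case).  Each `F k` has
`L`-Lipschitz gradient and is `λ`-weakly convex, `μ > λ ≥ 0`, `f` has `L`-Lipschitz
gradient, `g : Ω → ℝ^d` is a random vector with `E[g] = ∇f(w₀)`, and for each
device `k` and realization `g ω`, `w k ω` is a `γ`-inexact minimizer of the FedDANE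
subproblem.  Then
`∑ k, p k * E[f(w k)] ≤ f(w₀) - (1/μ - 3γ/(2(μ-λ)))‖∇f(w₀)‖²
  + (L(1+γ)²/(μ-λ)² + 3L/(2μ(μ-λ)))‖∇f(w₀)‖²
  + (L(1+γ)²/(μ-λ)² + L/(μ(μ-λ)) + γ/(μ-λ)) E[‖g - ∇f(w₀)‖²]`. -/
theorem feddane_expected_descent_nonconvex {d N : ℕ}
    {Ω : Type*} [MeasurableSpace Ω] (ℙ : Measure Ω) [IsProbabilityMeasure ℙ]
    (F : Fin N → EuclideanSpace ℝ (Fin d) → ℝ) (hF : ∀ k, ContDiff ℝ 1 (F k))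
    (p : Fin N → ℝ) (hp : ∀ k, 0 ≤ p k) (hpsum : ∑ k, p k = 1)
    (f : EuclideanSpace ℝ (Fin d) → ℝ) (hf : f = fun w => ∑ k, p k * F k w)
    (w₀ : EuclideanSpace ℝ (Fin d)) (lam μ γ L : ℝ)
    (hlam : 0 ≤ lam) (hμ : lam < μ) (hγ0 : 0 ≤ γ) (hγ1 : γ < 1) (hL : 0 ≤ L)
    (hweak : ∀ k, ConvexOn ℝ Set.univ fun w => F k w + lam / 2 * ‖w‖ ^ 2)
    (hFlip : ∀ k x y, ‖gradient (F k) x - gradient (F k) y‖ ≤ L * ‖x - y‖)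
    (hflip : ∀ x y, ‖gradient f x - gradient f y‖ ≤ L * ‖x - y‖)
    (g : Ω → EuclideanSpace ℝ (Fin d))
    (hg_int : Integrable g ℙ)
    (hg_mean : (∫ ω, g ω ∂ℙ) = gradient f w₀)
    (P : Fin N → EuclideanSpace ℝ (Fin d) → EuclideanSpace ℝ (Fin d) → ℝ)
    (hP : P = fun k gv w =>
      F k w + ⟪gv - gradient (F k) w₀, w - w₀⟫ + μ / 2 * ‖w - w₀‖ ^ 2)
    (w wbar : Fin N → Ω → EuclideanSpace ℝ (Fin d))
    (hmin : ∀ k ω v, P k (g ω) (wbar k ω) ≤ P k (g ω) v)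
    (hinexact : ∀ k ω, ‖w k ω - wbar k ω‖ ≤ γ * ‖wbar k ω - w₀‖)
    (hfw_int : ∀ k, Integrable (fun ω => f (w k ω)) ℙ)
    (hvar_int : Integrable (fun ω => ‖g ω - gradient f w₀‖ ^ 2) ℙ) :
    (∑ k, p k * ∫ ω, f (w k ω) ∂ℙ) ≤
      f w₀ - (1 / μ - 3 * γ / (2 * (μ - lam))) * ‖gradient f w₀‖ ^ 2 +
        (L * (1 + γ) ^ 2 / (μ - lam) ^ 2 + 3 * L / (2 * μ * (μ - lam))) *
          ‖gradient f w₀‖ ^ 2 +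
        (L * (1 + γ) ^ 2 / (μ - lam) ^ 2 + L / (μ * (μ - lam)) + γ / (μ - lam)) *
          ∫ ω, ‖g ω - gradient f w₀‖ ^ 2 ∂ℙ := by
  have hμ0 : (0:ℝ) < μ := lt_of_le_of_lt hlam hμ
  have hml : (0:ℝ) < μ - lam := sub_pos.2 hμ
  have hμne : μ ≠ 0 := ne_of_gt hμ0
  have hmlne : μ - lam ≠ 0 := ne_of_gt hml
  have hFd : ∀ k, Differentiable ℝ (F k) := fun k => (hF k).differentiable one_ne_zero
  have hfd : Differentiable ℝ f := by
    rw [hf]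
    exact Differentiable.fun_sum fun k _ => (hFd k).const_mul (p k)
  obtain ⟨C₁, hC₁⟩ : ∃ x : ℝ, x = L / (μ * (μ - lam)) + γ / (μ - lam) := ⟨_, rfl⟩
  obtain ⟨C₂, hC₂⟩ : ∃ x : ℝ, x = L * (1 + γ) ^ 2 / (μ - lam) ^ 2 := ⟨_, rfl⟩
  have hC₁0 : 0 ≤ C₁ := by rw [hC₁]; positivity
  have hC₂0 : 0 ≤ C₂ := by rw [hC₂]; positivity
  set G := gradient f w₀ with hG
  set V := ∫ ω, ‖g ω - G‖ ^ 2 ∂ℙ with hV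
  set hbd : Ω → ℝ := fun ω =>
    f w₀ + (-(1 / μ) + 3 / 2 * C₁ + C₂) * ‖G‖ ^ 2
      + (-(1 / μ) + 2 * C₂) * ⟪G, g ω - G⟫ + (C₁ / 2 + C₂) * ‖g ω - G‖ ^ 2 with hh
  -- pointwise bound
  have hpoint : ∀ k ω, f (w k ω) ≤ hbd ω := by
    intro k ω
    have hmin' := hmin k ω
    have hinex := hinexact k ω
    set b := wbar k ω with hb
    set u := w k ω with hu
    set gw := g ω with hgw
    set c : EuclideanSpace ℝ (Fin d) := gw - gradient (F k) w₀ with hc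
    set δ := b - w₀ with hδ
    set ζ := gradient (F k) b - gradient (F k) w₀ with hζ
    have hPeq : P k gw = fun v => F k v + ⟪c, v - w₀⟫ + μ / 2 * ‖v - w₀‖ ^ 2 := by
      funext v; simp only [hP, hc]
    have hQ : HasGradientAt (P k gw) (gradient (F k) b + c + μ • δ) b := by
      rw [hPeq, hδ]
      exact aux_gradQ ((hFd k b).hasGradientAt)
    have hzero : gradient (F k) b + c + μ • δ = 0 :=
      aux_min_grad_zero (fun v => hmin' v) hQ
    have hsum0 : μ • δ + (ζ + gw) = 0 := by
      have h9 : μ • δ + (ζ + gw) = gradient (F k) b + c + μ • δ := by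
        rw [hζ, hc]; abel
      rw [h9, hzero]
    have hFOC : μ • δ = -(ζ + gw) := add_eq_zero_iff_eq_neg.1 hsum0
    have hδdot : μ * ‖δ‖ ^ 2 + ⟪ζ, δ⟫ + ⟪gw, δ⟫ = 0 := by
      have h9 : ⟪μ • δ + (ζ + gw), δ⟫ = (0:ℝ) := by rw [hsum0, inner_zero_left]
      simp only [inner_add_left, real_inner_smul_left, real_inner_self_eq_norm_sq] at h9
      linarith
    have hderφ : ∀ z, HasGradientAt (fun u => F k u + lam / 2 * ‖u‖ ^ 2)
        (gradient (F k) z + lam • z) z := fun z => aux_gradR ((hFd k z).hasGradientAt)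
    have hk1 := aux_convex_first_order (hweak k) hderφ w₀ b
    have hk2 := aux_convex_first_order (hweak k) hderφ b w₀
    have hmono : 0 ≤ ⟪ζ, δ⟫ + lam * ‖δ‖ ^ 2 := by
      rw [← hδ] at hk1
      have hw : w₀ - b = -δ := by rw [hδ]; abel
      rw [hw] at hk2
      simp only [inner_add_left, inner_neg_right, real_inner_smul_left] at hk1 hk2
      have hbw : ⟪b, δ⟫ - ⟪w₀, δ⟫ = ‖δ‖ ^ 2 := by
        rw [← inner_sub_left, ← hδ, real_inner_self_eq_norm_sq]
      rw [hζ]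
      simp only [inner_sub_left]
      have hbw' : lam * ⟪b, δ⟫ - lam * ⟪w₀, δ⟫ = lam * ‖δ‖ ^ 2 := by
        rw [← mul_sub, hbw]
      linarith
    have hineq : -⟪gw, δ⟫ ≤ ‖gw‖ * ‖δ‖ := by
      have h9 := real_inner_le_norm (-gw) δ
      simpa [inner_neg_left] using h9
    have hA : (μ - lam) * ‖δ‖ ^ 2 ≤ ‖gw‖ * ‖δ‖ := by linarith
    have ht : ‖δ‖ ≤ ‖gw‖ / (μ - lam) := by
      rcases eq_or_lt_of_le (norm_nonneg δ) with h0 | h0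
      · rw [← h0]; positivity
      · rw [le_div_iff₀ hml]
        have hA' : ((μ - lam) * ‖δ‖) * ‖δ‖ ≤ ‖gw‖ * ‖δ‖ := by
          have hr : (μ - lam) * ‖δ‖ ^ 2 = ((μ - lam) * ‖δ‖) * ‖δ‖ := by ring
          linarith [hA, hr.ge, hr.le]
        have h10 := le_of_mul_le_mul_right hA' h0
        linarith
    have hdesc : f u ≤ f w₀ + ⟪G, u - w₀⟫ + L * ‖u - w₀‖ ^ 2 :=
      aux_descent_s7 hL (fun z => (hfd z).hasGradientAt) hflip w₀ u
    have hsplit : ⟪G, u - w₀⟫ = ⟪G, u - b⟫ + ⟪G, δ⟫ := by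
      rw [← inner_add_right]
      congr 1
      rw [hδ]; abel
    rw [hsplit] at hdesc
    have h2b : ⟪G, u - b⟫ ≤ ‖G‖ * (γ * ‖δ‖) := by
      calc ⟪G, u - b⟫ ≤ ‖G‖ * ‖u - b‖ := real_inner_le_norm _ _
        _ ≤ ‖G‖ * (γ * ‖δ‖) := mul_le_mul_of_nonneg_left hinex (norm_nonneg _)
    have hζn : ‖ζ‖ ≤ L * ‖δ‖ := by
      have h9 := hFlip k b w₀
      rw [← hζ, ← hδ] at h9; exact h9
    have h3 : μ * ⟪G, δ⟫ ≤ L * (‖G‖ * ‖δ‖) - ⟪G, gw⟫ := by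
      have h9 : μ * ⟪G, δ⟫ = ⟪G, μ • δ⟫ := (real_inner_smul_right G δ μ).symm
      rw [hFOC] at h9
      have h10 : ⟪G, -(ζ + gw)⟫ = -⟪G, ζ⟫ - ⟪G, gw⟫ := by
        rw [inner_neg_right, inner_add_right]; ring
      rw [h10] at h9
      have h11 : -⟪G, ζ⟫ ≤ ‖G‖ * ‖ζ‖ := by
        have h12 := real_inner_le_norm G (-ζ)
        simpa [inner_neg_right] using h12
      have h12 : ‖G‖ * ‖ζ‖ ≤ ‖G‖ * (L * ‖δ‖) := mul_le_mul_of_nonneg_left hζn (norm_nonneg _)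
      have h13 : ‖G‖ * (L * ‖δ‖) = L * (‖G‖ * ‖δ‖) := by ring
      linarith
    have h3' : ⟪G, δ⟫ ≤ (L * (‖G‖ * ‖δ‖) - ⟪G, gw⟫) / μ := by
      rw [le_div_iff₀ hμ0]
      have h13 : ⟪G, δ⟫ * μ = μ * ⟪G, δ⟫ := by ring
      linarith
    have hu1 : ‖u - w₀‖ ≤ (1 + γ) * ‖δ‖ := by
      have h9 : u - w₀ = (u - b) + δ := by rw [hδ]; abel
      calc ‖u - w₀‖ = ‖(u - b) + δ‖ := by rw [h9]
        _ ≤ ‖u - b‖ + ‖δ‖ := norm_add_le _ _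
        _ ≤ γ * ‖δ‖ + ‖δ‖ := add_le_add_left hinex _
        _ = (1 + γ) * ‖δ‖ := by ring
    have hq1 : L * ‖u - w₀‖ ^ 2 ≤ L * ((1 + γ) * ‖δ‖) ^ 2 :=
      mul_le_mul_of_nonneg_left (pow_le_pow_left₀ (norm_nonneg _) hu1 2) hL
    have step1 : f u ≤ f w₀ + ‖G‖ * (γ * ‖δ‖) + (L * (‖G‖ * ‖δ‖) - ⟪G, gw⟫) / μ
        + L * ((1 + γ) * ‖δ‖) ^ 2 := by linarith
    have hs0 : (0:ℝ) ≤ ‖gw‖ / (μ - lam) := by positivity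
    have m1 : ‖G‖ * (γ * ‖δ‖) ≤ ‖G‖ * (γ * (‖gw‖ / (μ - lam))) :=
      mul_le_mul_of_nonneg_left (mul_le_mul_of_nonneg_left ht hγ0) (norm_nonneg _)
    have m2 : (L * (‖G‖ * ‖δ‖) - ⟪G, gw⟫) / μ
        ≤ (L * (‖G‖ * (‖gw‖ / (μ - lam))) - ⟪G, gw⟫) / μ := by
      have h9 : L * (‖G‖ * ‖δ‖) - ⟪G, gw⟫ ≤ L * (‖G‖ * (‖gw‖ / (μ - lam))) - ⟪G, gw⟫ := by
        have := mul_le_mul_of_nonneg_left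
          (mul_le_mul_of_nonneg_left ht (norm_nonneg G)) hL
        linarith
      exact div_le_div_of_nonneg_right h9 hμ0.le
    have m3 : L * ((1 + γ) * ‖δ‖) ^ 2 ≤ L * ((1 + γ) * (‖gw‖ / (μ - lam))) ^ 2 := by
      have h9 : (1 + γ) * ‖δ‖ ≤ (1 + γ) * (‖gw‖ / (μ - lam)) :=
        mul_le_mul_of_nonneg_left ht (by linarith)
      exact mul_le_mul_of_nonneg_left
        (pow_le_pow_left₀ (by positivity) h9 2) hL
    have step2 : f u ≤ f w₀ + ‖G‖ * (γ * (‖gw‖ / (μ - lam)))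
        + (L * (‖G‖ * (‖gw‖ / (μ - lam))) - ⟪G, gw⟫) / μ
        + L * ((1 + γ) * (‖gw‖ / (μ - lam))) ^ 2 := by linarith
    have e1 : ‖G‖ * (γ * (‖gw‖ / (μ - lam)))
        + (L * (‖G‖ * (‖gw‖ / (μ - lam))) - ⟪G, gw⟫) / μ
        = C₁ * (‖G‖ * ‖gw‖) - ⟪G, gw⟫ / μ := by
      rw [hC₁]; field_simp; ring
    have e2 : L * ((1 + γ) * (‖gw‖ / (μ - lam))) ^ 2 = C₂ * ‖gw‖ ^ 2 := by
      rw [hC₂]; field_simp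
    have hdecomp : G + (gw - G) = gw := by abel
    have h8 : ⟪G, gw⟫ = ‖G‖ ^ 2 + ⟪G, gw - G⟫ := by
      conv_lhs => rw [← hdecomp]
      rw [inner_add_right, real_inner_self_eq_norm_sq]
    have h7 : ‖gw‖ ^ 2 = ‖G‖ ^ 2 + 2 * ⟪G, gw - G⟫ + ‖gw - G‖ ^ 2 := by
      conv_lhs => rw [← hdecomp]
      exact norm_add_sq_real G (gw - G)
    have h6 : ‖G‖ * ‖gw‖ ≤ 3 / 2 * ‖G‖ ^ 2 + 1 / 2 * ‖gw - G‖ ^ 2 := by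
      have h9 : ‖gw‖ ≤ ‖G‖ + ‖gw - G‖ := by
        calc ‖gw‖ = ‖G + (gw - G)‖ := by rw [hdecomp]
          _ ≤ ‖G‖ + ‖gw - G‖ := norm_add_le _ _
      have t1 : ‖G‖ * ‖gw‖ ≤ ‖G‖ * (‖G‖ + ‖gw - G‖) :=
        mul_le_mul_of_nonneg_left h9 (norm_nonneg _)
      have t2 : 2 * ‖G‖ * ‖gw - G‖ ≤ ‖G‖ ^ 2 + ‖gw - G‖ ^ 2 := two_mul_le_add_sq _ _
      have t3 : ‖G‖ * (‖G‖ + ‖gw - G‖) = ‖G‖ ^ 2 + ‖G‖ * ‖gw - G‖ := by ring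
      linarith
    have step3 : f u ≤ f w₀ + C₁ * (‖G‖ * ‖gw‖) - ⟪G, gw⟫ / μ + C₂ * ‖gw‖ ^ 2 := by
      linarith
    have step4 : C₁ * (‖G‖ * ‖gw‖) ≤ C₁ * (3 / 2 * ‖G‖ ^ 2 + 1 / 2 * ‖gw - G‖ ^ 2) :=
      mul_le_mul_of_nonneg_left h6 hC₁0
    have hC2e : C₂ * ‖gw‖ ^ 2
        = C₂ * ‖G‖ ^ 2 + 2 * C₂ * ⟪G, gw - G⟫ + C₂ * ‖gw - G‖ ^ 2 := by
      rw [h7]; ring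
    have hip : ⟪G, gw⟫ / μ = ‖G‖ ^ 2 / μ + ⟪G, gw - G⟫ / μ := by rw [h8]; ring
    simp only [hh]
    rw [← hgw]
    have expand1 : (-(1 / μ) + 3 / 2 * C₁ + C₂) * ‖G‖ ^ 2
        = -(‖G‖ ^ 2 / μ) + 3 / 2 * (C₁ * ‖G‖ ^ 2) + C₂ * ‖G‖ ^ 2 := by ring
    have expand2 : (-(1 / μ) + 2 * C₂) * ⟪G, gw - G⟫
        = -(⟪G, gw - G⟫ / μ) + 2 * C₂ * ⟪G, gw - G⟫ := by ring
    have expand3 : (C₁ / 2 + C₂) * ‖gw - G‖ ^ 2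
        = C₁ * (1 / 2 * ‖gw - G‖ ^ 2) + C₂ * ‖gw - G‖ ^ 2 := by ring
    have expand4 : C₁ * (3 / 2 * ‖G‖ ^ 2 + 1 / 2 * ‖gw - G‖ ^ 2)
        = 3 / 2 * (C₁ * ‖G‖ ^ 2) + C₁ * (1 / 2 * ‖gw - G‖ ^ 2) := by ring
    linarith
  -- summation
  have hsum_le : ∀ ω, (∑ k, p k * f (w k ω)) ≤ hbd ω := by
    intro ω
    calc (∑ k, p k * f (w k ω)) ≤ ∑ k : Fin N, p k * hbd ω :=
        Finset.sum_le_sum fun k _ => mul_le_mul_of_nonneg_left (hpoint k ω) (hp k)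
      _ = hbd ω := by rw [← Finset.sum_mul, hpsum, one_mul]
  -- integrability
  have hgsub_int : Integrable (fun ω => g ω - G) ℙ := hg_int.sub (integrable_const G)
  have hinner_int : Integrable (fun ω => ⟪G, g ω - G⟫) ℙ := by
    have h9 := ContinuousLinearMap.integrable_comp (innerSL ℝ G) hgsub_int
    simpa using h9
  have hbd_int : Integrable hbd ℙ := by
    rw [hh]
    exact ((integrable_const _).add (hinner_int.const_mul _)).add (hvar_int.const_mul _)
  have hsum_int : Integrable (fun ω => ∑ k, p k * f (w k ω)) ℙ :=
    integrable_finset_sum _ fun k _ => (hfw_int k).const_mul (p k)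
  have hLHSeq : (∑ k, p k * ∫ ω, f (w k ω) ∂ℙ) = ∫ ω, (∑ k, p k * f (w k ω)) ∂ℙ := by
    rw [integral_finset_sum _ fun k _ => (hfw_int k).const_mul (p k)]
    exact Finset.sum_congr rfl fun k _ => (integral_const_mul _ _).symm
  have hip0 : (∫ ω, ⟪G, g ω - G⟫ ∂ℙ) = 0 := by
    rw [integral_inner hgsub_int, integral_sub hg_int (integrable_const G), hg_mean,
      integral_const]
    simp [measure_univ]
  have hbd_eval : (∫ ω, hbd ω ∂ℙ)
      = f w₀ + (-(1 / μ) + 3 / 2 * C₁ + C₂) * ‖G‖ ^ 2 + (C₁ / 2 + C₂) * V := by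
    simp only [hh]
    have I0 : Integrable (fun _ : Ω =>
        f w₀ + (-(1 / μ) + 3 / 2 * C₁ + C₂) * ‖G‖ ^ 2) ℙ := integrable_const _
    have I1 : Integrable (fun ω =>
        f w₀ + (-(1 / μ) + 3 / 2 * C₁ + C₂) * ‖G‖ ^ 2
          + (-(1 / μ) + 2 * C₂) * ⟪G, g ω - G⟫) ℙ := I0.add (hinner_int.const_mul _)
    have I2 : Integrable (fun ω => (C₁ / 2 + C₂) * ‖g ω - G‖ ^ 2) ℙ :=
      hvar_int.const_mul _
    rw [integral_add I1 I2, integral_add I0 (hinner_int.const_mul _),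
      integral_const, integral_const_mul, integral_const_mul, hip0, ← hV]
    simp [measure_univ]
  have hV0 : 0 ≤ V := by
    rw [hV]
    exact integral_nonneg fun ω => by positivity
  have hkey : f w₀ - (1 / μ - 3 * γ / (2 * (μ - lam))) * ‖G‖ ^ 2 +
      (L * (1 + γ) ^ 2 / (μ - lam) ^ 2 + 3 * L / (2 * μ * (μ - lam))) * ‖G‖ ^ 2 +
      (L * (1 + γ) ^ 2 / (μ - lam) ^ 2 + L / (μ * (μ - lam)) + γ / (μ - lam)) * V
      = f w₀ + (-(1 / μ) + 3 / 2 * C₁ + C₂) * ‖G‖ ^ 2 + (C₁ + C₂) * V := by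
    rw [hC₁, hC₂]; field_simp; ring
  calc (∑ k, p k * ∫ ω, f (w k ω) ∂ℙ) = ∫ ω, (∑ k, p k * f (w k ω)) ∂ℙ := hLHSeq
    _ ≤ ∫ ω, hbd ω ∂ℙ := integral_mono hsum_int hbd_int hsum_le
    _ = f w₀ + (-(1 / μ) + 3 / 2 * C₁ + C₂) * ‖G‖ ^ 2 + (C₁ / 2 + C₂) * V := hbd_eval
    _ ≤ f w₀ - (1 / μ - 3 * γ / (2 * (μ - lam))) * ‖G‖ ^ 2 +
        (L * (1 + γ) ^ 2 / (μ - lam) ^ 2 + 3 * L / (2 * μ * (μ - lam))) * ‖G‖ ^ 2 +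
        (L * (1 + γ) ^ 2 / (μ - lam) ^ 2 + L / (μ * (μ - lam)) + γ / (μ - lam)) * V := by
      rw [hkey]
      linarith [mul_nonneg hC₁0 hV0]
end

section
/- (Deterministic descent with device-specific constants.) Fix a base point w₀ ∈ ℝ^d and a vector g ∈ ℝ^d. For a device k, let μ_k > 0, γ_k ∈ [0,1) and L_k > 0, suppose F_k is convex with L_k-Lipschitz gradient and f has L_k-Lipschitz gradient, let w̲_k be the exact minimizer of the FedDANE subproblem P_k(w) = F_k(w) + ⟨g − ∇F_k(w₀), w − w₀⟩ + (μ_k/2)‖w − w₀‖², and let w_k satisfy ‖w_k − w̲_k‖ ≤ γ_k ‖w̲_k − w₀‖. Then f(w_k) ≤ f(w₀) − ⟨∇f(w₀), g⟩/μ_k + (L_k/(2μ_k²) + γ_k/(2μ_k)) (‖∇f(w₀)‖² + ‖g‖²) + (L_k(1+γ_k)²/(2μ_k²)) ‖g‖². -/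
open scoped RealInnerProductSpace

section FedDaneAux

variable {E : Type*} [NormedAddCommGroup E] [InnerProductSpace ℝ E] [CompleteSpace E]

private lemma feddane_aux_hasDerivAt_line (f : E → ℝ) (hf : Differentiable ℝ f)
    (x v : E) (t : ℝ) :
    HasDerivAt (fun s : ℝ => f (x + s • v)) ⟪gradient f (x + t • v), v⟫ t := by
  have hc : HasDerivAt (fun s : ℝ => x + s • v) v t := by
    simpa using ((hasDerivAt_id t).smul_const v).const_add x
  have hg := (hf (x + t • v)).hasGradientAt
  rw [hasGradientAt_iff_hasFDerivAt] at hg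
  have := hg.comp_hasDerivAt t hc
  have h' : HasDerivAt (fun s : ℝ => f (x + s • v))
      ((InnerProductSpace.toDual ℝ E (gradient f (x + t • v))) v) t := this
  simpa [Function.comp, InnerProductSpace.toDual_apply_apply] using h'

private lemma feddane_aux_first_order (f : E → ℝ) (hf : Differentiable ℝ f)
    (hc : ConvexOn ℝ Set.univ f) (x y : E) :
    f x + ⟪gradient f x, y - x⟫ ≤ f y := by
  have hD : HasDerivAt (fun s : ℝ => f (x + s • (y - x))) ⟪gradient f x, y - x⟫ 0 := by
    simpa using feddane_aux_hasDerivAt_line f hf x (y - x) 0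
  rw [hasDerivAt_iff_tendsto_slope] at hD
  have hD' : Filter.Tendsto (slope (fun s : ℝ => f (x + s • (y - x))) 0)
      (nhdsWithin 0 (Set.Ioi 0)) (nhds ⟪gradient f x, y - x⟫) :=
    hD.mono_left (nhdsWithin_mono 0 (by intro z hz; exact ne_of_gt hz))
  have hbound : ∀ᶠ t in nhdsWithin (0:ℝ) (Set.Ioi 0),
      slope (fun s : ℝ => f (x + s • (y - x))) 0 t ≤ f y - f x := by
    filter_upwards [Ioo_mem_nhdsGT_of_mem (by norm_num : (0:ℝ) ∈ Set.Ico 0 1)] with t ht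
    have ht0 : 0 < t := ht.1
    have ht1 : t < 1 := ht.2
    have hcv := hc.2 (Set.mem_univ x) (Set.mem_univ y) (by linarith : (0:ℝ) ≤ 1 - t)
      (le_of_lt ht0) (by ring)
    have hxy : x + t • (y - x) = (1 - t) • x + t • y := by module
    have h2 : f (x + t • (y - x)) ≤ f x + t * (f y - f x) := by
      rw [hxy]; simp only [smul_eq_mul] at hcv; linarith
    rw [slope_def_field]
    simp only [zero_smul, add_zero, sub_zero]
    rw [div_le_iff₀ ht0]
    nlinarith [h2]
  have := le_of_tendsto hD' hbound
  linarith

private lemma feddane_aux_descent (f : E → ℝ) (hf : Differentiable ℝ f) {L : ℝ}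
    (hlip : ∀ a b, ‖gradient f a - gradient f b‖ ≤ L * ‖a - b‖) (x y : E) :
    f y ≤ f x + ⟪gradient f x, y - x⟫ + L / 2 * ‖y - x‖ ^ 2 := by
  set v := y - x with hv
  set ψ : ℝ → ℝ := fun t => f (x + t • v) - t * ⟪gradient f x, v⟫ - L / 2 * t ^ 2 * ‖v‖ ^ 2
    with hψ
  have hder : ∀ t : ℝ, HasDerivAt ψ
      (⟪gradient f (x + t • v), v⟫ - ⟪gradient f x, v⟫ - L / 2 * (2 * t) * ‖v‖ ^ 2) t := by
    intro t
    have h1 := feddane_aux_hasDerivAt_line f hf x v t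
    have h2 : HasDerivAt (fun t : ℝ => t * ⟪gradient f x, v⟫) ⟪gradient f x, v⟫ t := by
      simpa using (hasDerivAt_id t).mul_const (⟪gradient f x, v⟫)
    have h3 : HasDerivAt (fun t : ℝ => L / 2 * t ^ 2 * ‖v‖ ^ 2) (L / 2 * (2 * t) * ‖v‖ ^ 2) t := by
      have := ((hasDerivAt_pow 2 t).const_mul (L / 2)).mul_const (‖v‖ ^ 2)
      simpa [mul_comm, mul_assoc] using this
    exact (h1.sub h2).sub h3
  have hmono : AntitoneOn ψ (Set.Icc 0 1) := by
    apply antitoneOn_of_deriv_nonpos (convex_Icc 0 1)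
    · exact (fun t _ => ((hder t).continuousAt.continuousWithinAt))
    · exact fun t _ => ((hder t).differentiableAt.differentiableWithinAt)
    · intro t ht
      rw [interior_Icc] at ht
      rw [(hder t).deriv]
      have hb : ⟪gradient f (x + t • v) - gradient f x, v⟫ ≤ L * t * ‖v‖ ^ 2 := by
        calc ⟪gradient f (x + t • v) - gradient f x, v⟫
            ≤ ‖gradient f (x + t • v) - gradient f x‖ * ‖v‖ := real_inner_le_norm _ _
          _ ≤ (L * ‖(x + t • v) - x‖) * ‖v‖ :=
              mul_le_mul_of_nonneg_right (hlip _ _) (norm_nonneg _)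
          _ = L * t * ‖v‖ ^ 2 := by
              have : ‖(x + t • v) - x‖ = t * ‖v‖ := by
                simp [norm_smul, abs_of_pos ht.1]
              rw [this]; ring
      rw [inner_sub_left] at hb
      linarith
  have h01 := hmono (Set.left_mem_Icc.2 zero_le_one) (Set.right_mem_Icc.2 zero_le_one) zero_le_one
  simp only [hψ, zero_smul, add_zero, one_smul, zero_pow, one_pow, mul_zero, zero_mul,
    sub_zero, mul_one] at h01
  have hxy : x + v = y := by rw [hv]; abel
  rw [hxy] at h01
  linarith

private lemma feddane_aux_stationary (Fk : E → ℝ) (hFk : Differentiable ℝ Fk)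
    (w₀ g wbar : E) (μv : ℝ)
    (hmin : ∀ v, Fk wbar + ⟪g - gradient Fk w₀, wbar - w₀⟫ + μv / 2 * ‖wbar - w₀‖ ^ 2 ≤
      Fk v + ⟪g - gradient Fk w₀, v - w₀⟫ + μv / 2 * ‖v - w₀‖ ^ 2) :
    gradient Fk wbar + (g - gradient Fk w₀) + μv • (wbar - w₀) = 0 := by
  set a := g - gradient Fk w₀ with ha
  set P : E → ℝ := fun w => Fk w + ⟪a, w - w₀⟫ + μv / 2 * ‖w - w₀‖ ^ 2 with hPdef
  have hloc : IsLocalMin P wbar := Filter.Eventually.of_forall hmin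
  have h1 : HasFDerivAt Fk (InnerProductSpace.toDual ℝ E (gradient Fk wbar)) wbar :=
    hasGradientAt_iff_hasFDerivAt.1 (hFk wbar).hasGradientAt
  have hsub : HasFDerivAt (fun w : E => w - w₀) (ContinuousLinearMap.id ℝ E) wbar :=
    (hasFDerivAt_id wbar).sub_const w₀
  have h2 : HasFDerivAt (fun w : E => ⟪a, w - w₀⟫)
      ((InnerProductSpace.toDual ℝ E a).comp (ContinuousLinearMap.id ℝ E)) wbar := by
    have := (InnerProductSpace.toDual ℝ E a).hasFDerivAt.comp wbar hsub
    have h' : HasFDerivAt (fun w : E => InnerProductSpace.toDual ℝ E a (w - w₀))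
        ((InnerProductSpace.toDual ℝ E a).comp (ContinuousLinearMap.id ℝ E)) wbar := this
    simpa [Function.comp, InnerProductSpace.toDual_apply_apply] using h'
  have h3 : HasFDerivAt (fun w : E => ‖w - w₀‖ ^ 2)
      (2 • (innerSL ℝ (wbar - w₀)).comp (ContinuousLinearMap.id ℝ E)) wbar :=
    hsub.norm_sq
  have hPderiv : HasFDerivAt P
      ((InnerProductSpace.toDual ℝ E (gradient Fk wbar) +
        (InnerProductSpace.toDual ℝ E a).comp (ContinuousLinearMap.id ℝ E)) +
        (μv / 2) • (2 • (innerSL ℝ (wbar - w₀)).comp (ContinuousLinearMap.id ℝ E))) wbar :=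
    (h1.add h2).add (h3.const_mul (μv / 2))
  have hzero := hloc.hasFDerivAt_eq_zero hPderiv
  set q := gradient Fk wbar + a + μv • (wbar - w₀) with hq
  have happ := congrArg (fun T : E →L[ℝ] ℝ => T q) hzero
  simp only [ContinuousLinearMap.add_apply, ContinuousLinearMap.coe_smul',
    ContinuousLinearMap.smul_apply, ContinuousLinearMap.comp_apply,
    ContinuousLinearMap.id_apply, innerSL_apply_apply, InnerProductSpace.toDual_apply_apply,
    ContinuousLinearMap.zero_apply, smul_eq_mul] at happ
  have hq0 : ⟪q, q⟫ = 0 := by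
    simp only [nsmul_eq_mul, Nat.cast_ofNat] at happ
    have hexp : ⟪q, q⟫ = ⟪gradient Fk wbar, q⟫ + ⟪a, q⟫ + μv * ⟪wbar - w₀, q⟫ := by
      conv_lhs => rw [hq]
      rw [inner_add_left, inner_add_left, real_inner_smul_left]
    rw [hexp]; linarith
  have : q = 0 := by rwa [inner_self_eq_zero] at hq0
  rwa [hq] at this

end FedDaneAux

set_option maxHeartbeats 1600000 in
/-- deterministic descent with device-specific constants.
For a device `k` with constants `μ_k > 0`, `γ_k ∈ [0,1)`, `L_k > 0`, if `F k` is
convex with `L_k`-Lipschitz gradient, `f` has `L_k`-Lipschitz gradient, `w̲_k`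
exactly minimizes the FedDANE subproblem with penalty `μ_k`, and
`‖w_k - w̲_k‖ ≤ γ_k ‖w̲_k - w₀‖`, then
`f(w_k) ≤ f(w₀) - ⟪∇f(w₀), g⟫/μ_k + (L_k/(2μ_k²) + γ_k/(2μ_k))(‖∇f(w₀)‖² + ‖g‖²)
         + (L_k(1+γ_k)²/(2μ_k²))‖g‖²`. -/
theorem feddane_inexact_descent_device_specific {d N : ℕ}
    (F : Fin N → EuclideanSpace ℝ (Fin d) → ℝ) (hF : ∀ k, ContDiff ℝ 1 (F k))
    (p : Fin N → ℝ) (hp : ∀ k, 0 ≤ p k) (hpsum : ∑ k, p k = 1)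
    (f : EuclideanSpace ℝ (Fin d) → ℝ) (hf : f = fun w => ∑ k, p k * F k w)
    (w₀ g : EuclideanSpace ℝ (Fin d))
    (μ γ L : Fin N → ℝ) (k : Fin N)
    (hμ : 0 < μ k) (hγ0 : 0 ≤ γ k) (hγ1 : γ k < 1) (hL : 0 < L k)
    (hconv : ConvexOn ℝ Set.univ (F k))
    (hFlip : ∀ x y, ‖gradient (F k) x - gradient (F k) y‖ ≤ L k * ‖x - y‖)
    (hflip : ∀ x y, ‖gradient f x - gradient f y‖ ≤ L k * ‖x - y‖)
    (P : EuclideanSpace ℝ (Fin d) → ℝ)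
    (hP : P = fun w =>
      F k w + ⟪g - gradient (F k) w₀, w - w₀⟫ + μ k / 2 * ‖w - w₀‖ ^ 2)
    (wbark wk : EuclideanSpace ℝ (Fin d))
    (hmin : ∀ v, P wbark ≤ P v)
    (hinexact : ‖wk - wbark‖ ≤ γ k * ‖wbark - w₀‖) :
    f wk ≤ f w₀ - ⟪gradient f w₀, g⟫ / μ k +
        (L k / (2 * (μ k) ^ 2) + γ k / (2 * μ k)) *
          (‖gradient f w₀‖ ^ 2 + ‖g‖ ^ 2) +
        L k * (1 + γ k) ^ 2 / (2 * (μ k) ^ 2) * ‖g‖ ^ 2 := by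
  subst hP
  have hFkd : Differentiable ℝ (F k) := (hF k).differentiable one_ne_zero
  have hfd : Differentiable ℝ f := by
    rw [hf]
    exact Differentiable.fun_sum (fun i _ => ((hF i).differentiable one_ne_zero).const_mul (p i))
  -- notation
  set G := gradient f w₀ with hG
  set u := wbark - w₀ with hu
  set r := gradient (F k) wbark - gradient (F k) w₀ with hr
  set ν := (μ k)⁻¹ with hν
  have hμne : μ k ≠ 0 := hμ.ne'
  have hμν : μ k * ν = 1 := mul_inv_cancel₀ hμne
  have hν0 : 0 < ν := inv_pos.2 hμ
  -- stationarity
  have hstat := feddane_aux_stationary (F k) hFkd w₀ g wbark (μ k) hmin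
  have hstat' : μ k • u = -(r + g) := by
    have h : (r + g) + μ k • u = 0 := by
      rw [hr, hu]
      rw [show gradient (F k) wbark - gradient (F k) w₀ + g + μ k • (wbark - w₀)
        = gradient (F k) wbark + (g - gradient (F k) w₀) + μ k • (wbark - w₀) by abel]
      exact hstat
    exact eq_neg_of_add_eq_zero_right h
  -- monotonicity of gradient of F k
  have hmono : 0 ≤ ⟪r, u⟫ := by
    have A := feddane_aux_first_order (F k) hFkd hconv w₀ wbark
    have B := feddane_aux_first_order (F k) hFkd hconv wbark w₀
    have hneg : ⟪gradient (F k) wbark, w₀ - wbark⟫ = -⟪gradient (F k) wbark, u⟫ := by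
      rw [show w₀ - wbark = -u by rw [hu]; abel, inner_neg_right]
    rw [hr, inner_sub_left]
    rw [hneg] at B
    rw [← hu] at A
    linarith
  -- bound on ‖u‖
  have hCS : -⟪g, u⟫ ≤ ‖g‖ * ‖u‖ := by
    have := real_inner_le_norm (-g) u
    simpa [inner_neg_left] using this
  have hμu : μ k * ‖u‖ ^ 2 ≤ -⟪g, u⟫ := by
    have h1 : μ k * ‖u‖ ^ 2 = ⟪μ k • u, u⟫ := by
      rw [real_inner_smul_left, real_inner_self_eq_norm_sq]
    have h2 : ⟪μ k • u, u⟫ = -⟪r, u⟫ - ⟪g, u⟫ := by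
      rw [hstat', inner_neg_left, inner_add_left]; ring
    rw [h1, h2]; linarith
  have hnu : ‖u‖ ≤ ‖g‖ * ν := by
    rcases eq_or_lt_of_le (norm_nonneg u) with h0 | h0
    · rw [← h0]; positivity
    · have hle : μ k * ‖u‖ ≤ ‖g‖ := by
        have h11 := hμu.trans hCS
        have h12 : (μ k * ‖u‖) * ‖u‖ ≤ ‖g‖ * ‖u‖ := by nlinarith
        exact (mul_le_mul_iff_of_pos_right h0).mp h12
      have h13 : ν * (μ k * ‖u‖) ≤ ν * ‖g‖ := mul_le_mul_of_nonneg_left hle hν0.le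
      calc ‖u‖ = ν * (μ k * ‖u‖) := by rw [show ν * (μ k * ‖u‖) = (μ k * ν) * ‖u‖ by ring, hμν, one_mul]
        _ ≤ ν * ‖g‖ := h13
        _ = ‖g‖ * ν := by ring
  -- descent lemma
  have hdesc := feddane_aux_descent f hfd hflip w₀ wk
  have hsplit : ⟪G, wk - w₀⟫ = ⟪G, u⟫ + ⟪G, wk - wbark⟫ := by
    rw [← inner_add_right]
    congr 1
    rw [hu]; abel
  have hGu : ⟪G, u⟫ = (-⟪G, g⟫ - ⟪G, r⟫) * ν := by
    have h4 : μ k * ⟪G, u⟫ = -⟪G, g⟫ - ⟪G, r⟫ := by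
      rw [← real_inner_smul_right, hstat', inner_neg_right, inner_add_right]; ring
    calc ⟪G, u⟫ = ⟪G, u⟫ * (μ k * ν) := by rw [hμν, mul_one]
      _ = (μ k * ⟪G, u⟫) * ν := by ring
      _ = (-⟪G, g⟫ - ⟪G, r⟫) * ν := by rw [h4]
  -- bounds
  have amgm : ‖G‖ * ‖g‖ ≤ (‖G‖ ^ 2 + ‖g‖ ^ 2) / 2 := by nlinarith [sq_nonneg (‖G‖ - ‖g‖)]
  have hnr : ‖r‖ ≤ L k * (‖g‖ * ν) := by
    have := hFlip wbark w₀
    rw [← hr, ← hu] at this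
    exact this.trans (mul_le_mul_of_nonneg_left hnu hL.le)
  have hGr : -⟪G, r⟫ ≤ ‖G‖ * (L k * (‖g‖ * ν)) := by
    have h5 : -⟪G, r⟫ ≤ ‖G‖ * ‖r‖ := by
      have := real_inner_le_norm G (-r)
      simpa [inner_neg_right] using this
    exact h5.trans (mul_le_mul_of_nonneg_left hnr (norm_nonneg _))
  have b1 : (-⟪G, r⟫) * ν ≤ L k * ν ^ 2 / 2 * (‖G‖ ^ 2 + ‖g‖ ^ 2) := by
    calc (-⟪G, r⟫) * ν ≤ (‖G‖ * (L k * (‖g‖ * ν))) * ν :=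
          mul_le_mul_of_nonneg_right hGr hν0.le
      _ = L k * ν ^ 2 * (‖G‖ * ‖g‖) := by ring
      _ ≤ L k * ν ^ 2 * ((‖G‖ ^ 2 + ‖g‖ ^ 2) / 2) :=
          mul_le_mul_of_nonneg_left amgm (by positivity)
      _ = L k * ν ^ 2 / 2 * (‖G‖ ^ 2 + ‖g‖ ^ 2) := by ring
  have b2 : ⟪G, wk - wbark⟫ ≤ γ k * ν / 2 * (‖G‖ ^ 2 + ‖g‖ ^ 2) := by
    have h6 : ⟪G, wk - wbark⟫ ≤ ‖G‖ * ‖wk - wbark‖ := real_inner_le_norm _ _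
    have h7 : ‖wk - wbark‖ ≤ γ k * (‖g‖ * ν) := by
      refine hinexact.trans ?_
      exact mul_le_mul_of_nonneg_left hnu hγ0
    calc ⟪G, wk - wbark⟫ ≤ ‖G‖ * (γ k * (‖g‖ * ν)) :=
          h6.trans (mul_le_mul_of_nonneg_left h7 (norm_nonneg _))
      _ = γ k * ν * (‖G‖ * ‖g‖) := by ring
      _ ≤ γ k * ν * ((‖G‖ ^ 2 + ‖g‖ ^ 2) / 2) :=
          mul_le_mul_of_nonneg_left amgm (by positivity)
      _ = γ k * ν / 2 * (‖G‖ ^ 2 + ‖g‖ ^ 2) := by ring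
  have b3 : L k / 2 * ‖wk - w₀‖ ^ 2 ≤ L k * (1 + γ k) ^ 2 * ν ^ 2 / 2 * ‖g‖ ^ 2 := by
    have hw : ‖wk - w₀‖ ≤ (1 + γ k) * (‖g‖ * ν) := by
      have hsum : wk - w₀ = (wk - wbark) + u := by rw [hu]; abel
      have := norm_add_le (wk - wbark) u
      rw [← hsum] at this
      have h8 : ‖wk - wbark‖ + ‖u‖ ≤ γ k * ‖u‖ + ‖u‖ := by linarith [hinexact]
      have h9 : γ k * ‖u‖ + ‖u‖ = (1 + γ k) * ‖u‖ := by ring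
      have h10 : (1 + γ k) * ‖u‖ ≤ (1 + γ k) * (‖g‖ * ν) :=
        mul_le_mul_of_nonneg_left hnu (by linarith)
      linarith
    have hw2 : ‖wk - w₀‖ ^ 2 ≤ ((1 + γ k) * (‖g‖ * ν)) ^ 2 :=
      pow_le_pow_left₀ (norm_nonneg _) hw 2
    calc L k / 2 * ‖wk - w₀‖ ^ 2 ≤ L k / 2 * ((1 + γ k) * (‖g‖ * ν)) ^ 2 :=
          mul_le_mul_of_nonneg_left hw2 (by positivity)
      _ = L k * (1 + γ k) ^ 2 * ν ^ 2 / 2 * ‖g‖ ^ 2 := by ring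
  -- assemble
  have hfinal : f wk ≤ f w₀ - ⟪G, g⟫ * ν +
      (L k * ν ^ 2 / 2 + γ k * ν / 2) * (‖G‖ ^ 2 + ‖g‖ ^ 2) +
      L k * (1 + γ k) ^ 2 * ν ^ 2 / 2 * ‖g‖ ^ 2 := by
    rw [hsplit, hGu] at hdesc
    linarith [b1, b2, b3, hdesc]
  have heq : f w₀ - ⟪G, g⟫ * ν +
      (L k * ν ^ 2 / 2 + γ k * ν / 2) * (‖G‖ ^ 2 + ‖g‖ ^ 2) +
      L k * (1 + γ k) ^ 2 * ν ^ 2 / 2 * ‖g‖ ^ 2 =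
      f w₀ - ⟪G, g⟫ / μ k +
        (L k / (2 * (μ k) ^ 2) + γ k / (2 * μ k)) * (‖G‖ ^ 2 + ‖g‖ ^ 2) +
        L k * (1 + γ k) ^ 2 / (2 * (μ k) ^ 2) * ‖g‖ ^ 2 := by
    rw [hν]
    field_simp
  linarith [hfinal, heq.symm.le, heq.le]
end
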